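/- arXiv:1912.03288 — 3 statements merged into one kernel-verified Lean document; each statement's English description precedes it below -/
import Mathlib

section
/- For any finite connected, acyclic and N-free poset P there exists an element p' ∈ P such that every other element of P is comparable to p'. -/
/-- `U` induces a disjoint union of chains such that any two elements belonging to different
chains are incomparable; equivalently, comparability restricted to `U` is transitive
(so the comparability graph induced on `U` is a vertex-disjoint union of cliques). -/
def IsChainUnion {α : Type*} [PartialOrder α] (U : Finset α) : Prop :=
  ∀ x ∈ U, ∀ y ∈ U, ∀ z ∈ U,
    (x ≤ y ∨ y ≤ x) → (y ≤ z ∨ z ≤ y) → (x ≤ z ∨ z ≤ x)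

/-- `ao α`: the maximum cardinality of a subset of the finite poset `α` that is a
disjoint union of chains with elements of different chains incomparable. -/
noncomputable def ao (α : Type*) [Fintype α] [PartialOrder α] : ℕ :=
  sSup {m | ∃ U : Finset α, IsChainUnion U ∧ U.card = m}

/-- The height of a finite poset: the maximum size of a chain. -/
noncomputable def heightP (α : Type*) [Fintype α] [PartialOrder α] : ℕ :=
  sSup {m | ∃ C : Finset α, IsChain (· ≤ ·) (↑C : Set α) ∧ C.card = m}

/-- The width of a finite poset: the maximum size of an antichain. -/
noncomputable def widthP (α : Type*) [Fintype α] [PartialOrder α] : ℕ :=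
  sSup {m | ∃ A : Finset α, IsAntichain (· ≤ ·) (↑A : Set α) ∧ A.card = m}

/-- The cover graph of a poset: `x` and `y` are adjacent iff one covers the other. -/
def coverGraph (α : Type*) [PartialOrder α] : SimpleGraph α where
  Adj x y := x ⋖ y ∨ y ⋖ x
  symm := ⟨fun x y h => h.symm⟩
  loopless := ⟨fun x h => by rcases h with h | h <;> exact absurd h.lt (lt_irrefl x)⟩

/-- A poset is acyclic if its cover graph has no cycles. -/
def AcyclicPoset (α : Type*) [PartialOrder α] : Prop := (coverGraph α).IsAcyclic

/-- A poset is connected if its cover graph is connected. -/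
def ConnectedPoset (α : Type*) [PartialOrder α] : Prop := (coverGraph α).Connected

/-- A poset is `N`-free if there are no `p1, p2, p3, p4` with `p1 > p3`, `p1 > p4`, `p2 > p4`,
`p1 ∦ p2`, `p2 ∦ p3`, `p3 ∦ p4`. -/
def NFree (α : Type*) [PartialOrder α] : Prop :=
  ¬ ∃ p1 p2 p3 p4 : α, p3 < p1 ∧ p4 < p1 ∧ p4 < p2 ∧
      ¬(p1 ≤ p2 ∨ p2 ≤ p1) ∧ ¬(p2 ≤ p3 ∨ p3 ≤ p2) ∧ ¬(p3 ≤ p4 ∨ p4 ≤ p3)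

/-- A poset is `V`-free if there are no `p1 < p2`, `p1 < p3` with `p2` incomparable to `p3`. -/
def VFree (α : Type*) [PartialOrder α] : Prop :=
  ¬ ∃ p1 p2 p3 : α, p1 < p2 ∧ p1 < p3 ∧ ¬(p2 ≤ p3 ∨ p3 ≤ p2)

/-- `ao` of the family `T_n` of all acyclic posets on `n` elements:
the minimum of `ao P` over acyclic posets `P` of size `n`. -/
noncomputable def aoT (n : ℕ) : ℕ :=
  sInf {m | ∃ P : PartialOrder (Fin n),
    @AcyclicPoset (Fin n) P ∧ @ao (Fin n) (Fin.fintype n) P = m}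

/-- `Λ(a, h)`: the maximum cardinality of a `V`-free poset `P` with `ao P = a` and
height at most `h`. -/
noncomputable def Lam (a h : ℕ) : ℕ :=
  sSup {n | ∃ P : PartialOrder (Fin n), @VFree (Fin n) P ∧
    @ao (Fin n) (Fin.fintype n) P = a ∧ @heightP (Fin n) (Fin.fintype n) P ≤ h}

/-- `Λ(a) = Λ(a, a)`. -/
noncomputable def Lambda (a : ℕ) : ℕ := Lam a a

/-- `X(a)`: the maximum cardinality of an acyclic and `N`-free poset `P` with `ao P = a`. -/
noncomputable def Xmax (a : ℕ) : ℕ :=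
  sSup {n | ∃ P : PartialOrder (Fin n), @AcyclicPoset (Fin n) P ∧
    @NFree (Fin n) P ∧ @ao (Fin n) (Fin.fintype n) P = a}


section CentralElement

universe u

open SimpleGraph

lemma coverGraph_dual (α : Type u) [PartialOrder α] : coverGraph αᵒᵈ = coverGraph α := by
  ext x y
  exact ⟨fun h => h.elim (fun h => Or.inr h.ofDual) (fun h => Or.inl h.ofDual),
         fun h => h.elim (fun h => Or.inr h.toDual) (fun h => Or.inl h.toDual)⟩

lemma exists_leaf {α : Type u} [Fintype α] [PartialOrder α]
    (hconn : ConnectedPoset α) (hacyc : AcyclicPoset α)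
    (hcard : 2 ≤ Fintype.card α) :
    ∃ ℓ v : α, (coverGraph α).Adj ℓ v ∧ ∀ w, (coverGraph α).Adj ℓ w → w = v := by
  classical
  set G := coverGraph α with hG
  have htree : G.IsTree := ⟨hconn, hacyc⟩
  have hdegpos : ∀ v : α, 0 < G.degree v := by
    intro v
    rw [G.degree_pos_iff_exists_adj]
    obtain ⟨w, hw⟩ := Fintype.exists_ne_of_one_lt_card hcard v
    obtain ⟨p⟩ := hconn.preconnected v w
    cases p with
    | nil => exact absurd rfl hw
    | cons h _ => exact ⟨_, h⟩
  have hsum : ∑ v, G.degree v = 2 * (Fintype.card α - 1) := by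
    rw [G.sum_degrees_eq_twice_card_edges]
    have := htree.card_edgeFinset
    omega
  have hleaf : ∃ ℓ : α, G.degree ℓ = 1 := by
    by_contra h
    push_neg at h
    have h2 : ∀ v : α, 2 ≤ G.degree v := by
      intro v
      have := hdegpos v
      have := h v
      omega
    have hle : 2 * Fintype.card α ≤ ∑ v, G.degree v := by
      calc 2 * Fintype.card α = ∑ _v : α, 2 := by
            simp [Finset.sum_const, Finset.card_univ, mul_comm]
        _ ≤ ∑ v, G.degree v := Finset.sum_le_sum (fun v _ => h2 v)
    omega
  obtain ⟨ℓ, hℓ⟩ := hleaf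
  rw [← G.card_neighborFinset_eq_degree] at hℓ
  obtain ⟨v, hv⟩ := Finset.card_eq_one.mp hℓ
  refine ⟨ℓ, v, ?_, ?_⟩
  · have : v ∈ G.neighborFinset ℓ := by rw [hv]; exact Finset.mem_singleton_self v
    exact (SimpleGraph.mem_neighborFinset _ _ _).mp this
  · intro w hw
    have : w ∈ G.neighborFinset ℓ := (SimpleGraph.mem_neighborFinset _ _ _).mpr hw
    rw [hv, Finset.mem_singleton] at this
    exact this

lemma central_step {α : Type u} [Fintype α] [PartialOrder α]
    (hconn : ConnectedPoset α) (hacyc : AcyclicPoset α) (hN : NFree α)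
    (ℓ v : α) (hvℓ : v ⋖ ℓ) (hmax : ∀ x : α, ¬ ℓ < x)
    (huniq : ∀ w, (coverGraph α).Adj ℓ w → w = v)
    (IH : ∀ (β : Type u) [Fintype β] [PartialOrder β], Fintype.card β < Fintype.card α →
        ConnectedPoset β → AcyclicPoset β → NFree β →
        ∃ p' : β, ∀ p : β, p ≠ p' → p ≤ p' ∨ p' ≤ p) :
    ∃ p' : α, ∀ p : α, p ≠ p' → p ≤ p' ∨ p' ≤ p := by
  classical
  letI := Fintype.toLocallyFiniteOrder (α := α)
  have hA : ∀ x : α, x < ℓ → x ≤ v := by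
    intro x hx
    obtain ⟨w, hxw, hwℓ⟩ := hx.exists_le_covby
    have hw : w = v := huniq w (Or.inr hwℓ)
    exact hw ▸ hxw
  have hvne : v ≠ ℓ := hvℓ.lt.ne
  have hcardlt : Fintype.card {x : α // x ≠ ℓ} < Fintype.card α :=
    Fintype.card_subtype_lt (x := ℓ) (by simp)
  have hcov : ∀ x y : {x : α // x ≠ ℓ}, x ⋖ y ↔ (x : α) ⋖ (y : α) := by
    rintro ⟨x, hxℓ⟩ ⟨y, hyℓ⟩
    constructor
    · intro h
      refine ⟨Subtype.mk_lt_mk.mp h.lt, ?_⟩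
      intro z hz1 hz2
      have hzℓ : z ≠ ℓ := by
        rintro rfl
        exact hmax _ hz2
      exact h.2 (c := ⟨z, hzℓ⟩) (Subtype.mk_lt_mk.mpr hz1) (Subtype.mk_lt_mk.mpr hz2)
    · intro h
      refine ⟨Subtype.mk_lt_mk.mpr h.lt, ?_⟩
      rintro ⟨z, hzℓ⟩ hz1 hz2
      exact h.2 (Subtype.mk_lt_mk.mp hz1) (Subtype.mk_lt_mk.mp hz2)
  have hadj : ∀ x y : {x : α // x ≠ ℓ},
      (coverGraph {x : α // x ≠ ℓ}).Adj x y ↔ (coverGraph α).Adj (x : α) (y : α) := by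
    intro x y
    exact or_congr (hcov x y) (hcov y x)
  have hconnβ : ConnectedPoset {x : α // x ≠ ℓ} := by
    have hne : Nonempty {x : α // x ≠ ℓ} := ⟨⟨v, hvne⟩⟩
    have key : ∀ n : ℕ, ∀ (x y : α) (hx : x ≠ ℓ) (hy : y ≠ ℓ)
        (w : (coverGraph α).Walk x y), w.length ≤ n →
        (coverGraph {x : α // x ≠ ℓ}).Reachable ⟨x, hx⟩ ⟨y, hy⟩ := by
      intro n
      induction n with
      | zero =>
        intro x y hx hy w hw
        have hxy : x = y := Walk.eq_of_length_eq_zero (Nat.le_zero.mp hw)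
        subst hxy
        exact Reachable.refl _
      | succ n ih =>
        intro x y hx hy w hw
        cases w with
        | nil => exact Reachable.refl _
        | cons h w' =>
          rename_i z
          by_cases hz : z = ℓ
          · cases w' with
            | nil => exact absurd hz hy
            | cons h2 w'' =>
              rename_i z2
              have hz2v : z2 = v := huniq z2 (by rw [← hz]; exact h2)
              have hxv : x = v := huniq x (by rw [← hz]; exact h.symm)
              have hz2ℓ : z2 ≠ ℓ := by rw [hz2v]; exact hvne
              have hxz2 : (⟨x, hx⟩ : {x : α // x ≠ ℓ}) = ⟨z2, hz2ℓ⟩ :=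
                Subtype.ext (show x = z2 by rw [hxv, hz2v])
              rw [hxz2]
              apply ih z2 y hz2ℓ hy w''
              simp only [Walk.length_cons] at hw
              omega
          · have hadjβ : (coverGraph {x : α // x ≠ ℓ}).Adj ⟨x, hx⟩ ⟨z, hz⟩ :=
              (hadj _ _).mpr h
            refine hadjβ.reachable.trans (ih z y hz hy w' ?_)
            simp only [Walk.length_cons] at hw
            omega
    constructor
    intro a b
    obtain ⟨w⟩ := hconn.preconnected a.1 b.1
    exact key w.length a.1 b.1 a.2 b.2 w le_rfl
  have hacycβ : AcyclicPoset {x : α // x ≠ ℓ} := by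
    intro x c hc
    let f : coverGraph {x : α // x ≠ ℓ} →g coverGraph α :=
      ⟨Subtype.val, fun {a b} h => (hadj a b).mp h⟩
    exact hacyc (c.map f) (hc.map Subtype.val_injective)
  have hNβ : NFree {x : α // x ≠ ℓ} := by
    rintro ⟨p1, p2, p3, p4, h1, h2, h3, h4, h5, h6⟩
    exact hN ⟨p1.1, p2.1, p3.1, p4.1,
      Subtype.coe_lt_coe.mpr h1, Subtype.coe_lt_coe.mpr h2, Subtype.coe_lt_coe.mpr h3,
      fun hc => h4 (hc.imp Subtype.coe_le_coe.mp Subtype.coe_le_coe.mp),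
      fun hc => h5 (hc.imp Subtype.coe_le_coe.mp Subtype.coe_le_coe.mp),
      fun hc => h6 (hc.imp Subtype.coe_le_coe.mp Subtype.coe_le_coe.mp)⟩
  obtain ⟨q, hq⟩ := IH {x : α // x ≠ ℓ} hcardlt hconnβ hacycβ hNβ
  by_cases hqℓ : (q : α) ≤ ℓ ∨ ℓ ≤ (q : α)
  · refine ⟨q.1, fun p hp => ?_⟩
    by_cases hpℓ : p = ℓ
    · subst hpℓ
      exact hqℓ.symm
    · have := hq ⟨p, hpℓ⟩ (fun hh => hp (congrArg Subtype.val hh))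
      exact this.imp Subtype.coe_le_coe.mpr Subtype.coe_le_coe.mpr
  · push_neg at hqℓ
    obtain ⟨h1, h2⟩ := hqℓ
    have hqv : (q : α) ≠ v := fun hh => h1 (hh ▸ hvℓ.le)
    have hvq : v < (q : α) := by
      rcases hq ⟨v, hvne⟩ (fun hh => hqv (congrArg Subtype.val hh).symm) with h | h
      · exact lt_of_le_of_ne (Subtype.coe_le_coe.mpr h) (Ne.symm hqv)
      · exact absurd ((Subtype.coe_le_coe.mpr h).trans hvℓ.le) h1
    refine ⟨v, fun p hpv => ?_⟩
    by_cases hpℓ : p = ℓ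
    · subst hpℓ
      exact Or.inr hvℓ.le
    by_cases hpq : p = q.1
    · exact Or.inr (hpq ▸ hvq.le)
    have hcompq : p ≤ (q : α) ∨ (q : α) ≤ p :=
      (hq ⟨p, hpℓ⟩ (fun hh => hpq (congrArg Subtype.val hh))).imp
        Subtype.coe_le_coe.mpr Subtype.coe_le_coe.mpr
    by_contra hnc
    push_neg at hnc
    obtain ⟨hn1, hn2⟩ := hnc
    rcases hcompq with hle | hge
    · have hplt : p < (q : α) := lt_of_le_of_ne hle hpq
      have hpℓ' : ¬(ℓ ≤ p ∨ p ≤ ℓ) := by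
        rintro (hh | hh)
        · exact hmax p (lt_of_le_of_ne hh (fun e => hpℓ e.symm))
        · exact hn1 (hA p (lt_of_le_of_ne hh hpℓ))
      exact hN ⟨q.1, ℓ, p, v, hplt, hvq, hvℓ.lt,
        fun hh => hh.elim h1 h2, hpℓ', fun hh => hh.elim hn1 hn2⟩
    · exact hn2 (hvq.le.trans hge)

lemma central_key : ∀ (n : ℕ) (α : Type u) [Fintype α] [PartialOrder α],
    Fintype.card α = n → ConnectedPoset α → AcyclicPoset α → NFree α →
    ∃ p' : α, ∀ p : α, p ≠ p' → p ≤ p' ∨ p' ≤ p := by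
  intro n
  induction n using Nat.strong_induction_on with
  | _ n IH =>
    intro α _ _ hcard hconn hacyc hN
    classical
    letI := Fintype.toLocallyFiniteOrder (α := α)
    by_cases h1 : Fintype.card α ≤ 1
    · have hsub : Subsingleton α := Fintype.card_le_one_iff_subsingleton.mp h1
      obtain ⟨p⟩ := hconn.nonempty
      exact ⟨p, fun q hq => absurd (Subsingleton.elim q p) hq⟩
    · have h2 : 2 ≤ Fintype.card α := by omega
      obtain ⟨ℓ, v, hadj, huniq⟩ := exists_leaf hconn hacyc h2
      have IH' : ∀ (β : Type u) [Fintype β] [PartialOrder β],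
          Fintype.card β < Fintype.card α →
          ConnectedPoset β → AcyclicPoset β → NFree β →
          ∃ p' : β, ∀ p : β, p ≠ p' → p ≤ p' ∨ p' ≤ p := by
        intro β _ _ hlt
        exact IH (Fintype.card β) (hcard ▸ hlt) β rfl
      rcases hadj with hlv | hvl
      · -- ℓ ⋖ v : dualize
        have hconn' : ConnectedPoset αᵒᵈ := by
          unfold ConnectedPoset
          rw [coverGraph_dual]
          exact hconn
        have hacyc' : AcyclicPoset αᵒᵈ := by
          unfold AcyclicPoset
          rw [coverGraph_dual]
          exact hacyc
        have hN' : NFree αᵒᵈ := by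
          rintro ⟨p1, p2, p3, p4, h1', h2', h3', h4', h5', h6'⟩
          exact hN ⟨OrderDual.ofDual p4, OrderDual.ofDual p3, OrderDual.ofDual p2,
            OrderDual.ofDual p1, h3', h2', h1', h6', h5', h4'⟩
        have hvℓ' : OrderDual.toDual v ⋖ OrderDual.toDual ℓ := hlv.toDual
        have hmax' : ∀ x : αᵒᵈ, ¬ (OrderDual.toDual ℓ) < x := by
          intro x hx
          have hx' : OrderDual.ofDual x < ℓ := hx
          obtain ⟨w, _, hwℓ⟩ := hx'.exists_le_covby
          have hwv : w = v := huniq w (Or.inr hwℓ)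
          exact absurd (hlv.lt.trans (hwv ▸ hwℓ).lt) (lt_irrefl ℓ)
        have huniq' : ∀ w : αᵒᵈ, (coverGraph αᵒᵈ).Adj (OrderDual.toDual ℓ) w →
            w = OrderDual.toDual v := by
          intro w hw
          rw [coverGraph_dual] at hw
          exact huniq (OrderDual.ofDual w) hw
        have IH'' : ∀ (β : Type u) [Fintype β] [PartialOrder β],
            Fintype.card β < Fintype.card αᵒᵈ →
            ConnectedPoset β → AcyclicPoset β → NFree β →
            ∃ p' : β, ∀ p : β, p ≠ p' → p ≤ p' ∨ p' ≤ p := IH'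
        obtain ⟨p', hp'⟩ := central_step hconn' hacyc' hN'
          (OrderDual.toDual ℓ) (OrderDual.toDual v) hvℓ' hmax' huniq' IH''
        refine ⟨OrderDual.ofDual p', fun p hp => ?_⟩
        exact (hp' (OrderDual.toDual p)
          (fun e => hp (congrArg OrderDual.ofDual e))).symm
      · -- v ⋖ ℓ : direct
        have hmax : ∀ x : α, ¬ ℓ < x := by
          intro x hx
          obtain ⟨w, hw, _⟩ := hx.exists_covby_le
          have hwv : w = v := huniq w (Or.inl hw)
          exact absurd (hvl.lt.trans (hwv ▸ hw.lt)) (lt_irrefl v)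
        exact central_step hconn hacyc hN ℓ v hvl hmax huniq IH'

end CentralElement

/-- any finite connected, acyclic and `N`-free poset has an element comparable
to every other element. -/
theorem exists_central_element (α : Type*) [Fintype α] [PartialOrder α]
    (hconn : ConnectedPoset α) (hacyc : AcyclicPoset α) (hN : NFree α) :
    ∃ p' : α, ∀ p : α, p ≠ p' → p ≤ p' ∨ p' ≤ p := by
  exact central_key (Fintype.card α) α rfl hconn hacyc hN
end

section
/- For any a ≥ 2, Λ(a) = max { Λ(f) + Λ(a−f) + (a−f) : a/2 ≤ f < a }. -/
/-- Index set for the "tree" clause. -/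
def treeIdx (a h : ℕ) : Finset (ℕ × ℕ × ℕ) :=
  ((Finset.Icc 1 h) ×ˢ (Finset.Icc 1 h) ×ˢ (Finset.Icc 1 a)).filter
    (fun p => p.2.1 ≤ p.2.2 ∧ p.1 + p.2.1 ≤ h ∧ max p.2.2 (p.1 + p.2.1) = a)

lemma mem_treeIdx {a h : ℕ} {p : ℕ × ℕ × ℕ} :
    p ∈ treeIdx a h ↔ 1 ≤ p.1 ∧ 1 ≤ p.2.1 ∧ p.2.1 ≤ p.2.2 ∧ p.2.2 ≤ a ∧
      p.1 + p.2.1 ≤ h ∧ max p.2.2 (p.1 + p.2.1) = a := by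
  simp only [treeIdx, Finset.mem_filter, Finset.mem_product, Finset.mem_Icc]
  constructor
  · rintro ⟨⟨⟨h1,h2⟩,⟨h3,h4⟩,h5,h6⟩,h7,h8,h9⟩
    exact ⟨h1,h3,h7,h6,h8,h9⟩
  · rintro ⟨h1,h2,h3,h4,h5,h6⟩
    refine ⟨⟨⟨h1, ?_⟩, ⟨h2, ?_⟩, ?_, h4⟩, h3, h5, h6⟩ <;> omega

/-- Arithmetic recursion computing `Λ(a,h)`. -/
def M (a h : ℕ) : ℕ :=
  max a <| max
    ((Finset.Ico 1 a).attach.sup fun f =>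
      M f.1 (min f.1 h) + M (a - f.1) (min (a - f.1) h))
    ((treeIdx a h).attach.sup fun p => p.1.1 + M p.1.2.2 p.1.2.1)
termination_by a + h
decreasing_by
  · have hf := f.2
    simp only [Finset.mem_Ico] at hf
    omega
  · have hf := f.2
    simp only [Finset.mem_Ico] at hf
    omega
  · have hp := mem_treeIdx.1 p.2
    omega

lemma M_ge_self (a h : ℕ) : a ≤ M a h := by
  rw [M]; exact le_max_left _ _

lemma M_ge_split {a h : ℕ} (f : ℕ) (h1 : 1 ≤ f) (h2 : f < a) :
    M f (min f h) + M (a - f) (min (a - f) h) ≤ M a h := by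
  conv_rhs => rw [M]
  refine le_trans ?_ (le_trans (le_max_left _ _) (le_max_right _ _))
  exact Finset.le_sup (f := fun p : {x // x ∈ Finset.Ico 1 a} =>
    M p.1 (min p.1 h) + M (a - p.1) (min (a - p.1) h))
    (Finset.mem_attach _ ⟨f, Finset.mem_Ico.2 ⟨h1, h2⟩⟩)

lemma M_ge_tree {a h ℓ m s : ℕ} (hℓ : 1 ≤ ℓ) (hm : 1 ≤ m) (hms : m ≤ s) (hsa : s ≤ a)
    (hlh : ℓ + m ≤ h) (hmax : max s (ℓ + m) = a) :
    ℓ + M s m ≤ M a h := by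
  conv_rhs => rw [M]
  refine le_trans ?_ (le_trans (le_max_right _ _) (le_max_right _ _))
  exact Finset.le_sup (f := fun p : {x // x ∈ treeIdx a h} => p.1.1 + M p.1.2.2 p.1.2.1)
    (Finset.mem_attach _ ⟨(ℓ, m, s), mem_treeIdx.2 ⟨hℓ, hm, hms, hsa, hlh, hmax⟩⟩)

lemma M_le {a h c : ℕ} (h0 : a ≤ c)
    (hsplit : ∀ f, 1 ≤ f → f < a →
      M f (min f h) + M (a - f) (min (a - f) h) ≤ c)
    (htree : ∀ ℓ m s, 1 ≤ ℓ → 1 ≤ m → m ≤ s → s ≤ a → ℓ + m ≤ h →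
      max s (ℓ + m) = a → ℓ + M s m ≤ c) :
    M a h ≤ c := by
  conv_lhs => rw [M]
  refine max_le h0 (max_le (Finset.sup_le ?_) (Finset.sup_le ?_))
  · rintro ⟨f, hf⟩ -
    rw [Finset.mem_Ico] at hf
    exact hsplit f hf.1 hf.2
  · rintro ⟨⟨ℓ, m, s⟩, hp⟩ -
    rw [mem_treeIdx] at hp
    exact htree ℓ m s hp.1 hp.2.1 hp.2.2.1 hp.2.2.2.1 hp.2.2.2.2.1 hp.2.2.2.2.2
lemma M_zero (h : ℕ) : M 0 h = 0 :=
  Nat.le_antisymm (M_le le_rfl (by omega) (by omega)) (Nat.zero_le _)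

lemma M_h_one (a : ℕ) : M a 1 = a := by
  induction a using Nat.strong_induction_on with
  | _ a ih =>
    refine Nat.le_antisymm (M_le le_rfl ?_ (by omega)) (M_ge_self a 1)
    intro f h1 h2
    rw [min_eq_right h1, min_eq_right (by omega : 1 ≤ a - f), ih f h2, ih (a - f) (by omega)]
    omega

lemma M_mono_h {a h h' : ℕ} (hh : h ≤ h') : M a h ≤ M a h' := by
  induction a using Nat.strong_induction_on generalizing h h' with
  | _ a ih =>
    refine M_le (M_ge_self a h') ?_ ?_
    · intro f h1 h2
      calc M f (min f h) + M (a - f) (min (a - f) h)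
          ≤ M f (min f h') + M (a - f) (min (a - f) h') := by
            exact Nat.add_le_add (ih f h2 (by omega)) (ih (a - f) (by omega) (by omega))
        _ ≤ M a h' := M_ge_split f h1 h2
    · intro ℓ m s h1 h2 h3 h4 h5 h6
      exact M_ge_tree h1 h2 h3 h4 (by omega) h6

lemma M_mono_a {m s a : ℕ} (hm : 1 ≤ m) (hms : m ≤ s) (hsa : s ≤ a) : M s m ≤ M a m := by
  induction a, hsa using Nat.le_induction with
  | base => exact le_rfl
  | succ a ha ih =>
    refine le_trans ih ?_
    have h1 : M a (min a m) + M (a + 1 - a) (min (a + 1 - a) m) ≤ M (a + 1) m :=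
      M_ge_split a (by omega) (by omega)
    rw [min_eq_right (by omega), (by omega : a + 1 - a = 1), min_eq_left hm, M_h_one] at h1
    omega

lemma M_succ_h {a m : ℕ} (hm : 1 ≤ m) (hma : m + 1 ≤ a) : M a m + 1 ≤ M a (m + 1) := by
  have := M_ge_tree (a := a) (h := m + 1) (ℓ := 1) (m := m) (s := a)
    le_rfl hm (by omega) le_rfl (by omega) (by omega)
  omega

lemma M_add_le {a m h : ℕ} (hm : 1 ≤ m) (hmh : m ≤ h) (hha : h ≤ a) :
    M a m + (h - m) ≤ M a h := by
  induction h, hmh using Nat.le_induction with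
  | base => simp
  | succ h hh ih =>
    have h1 : M a h + 1 ≤ M a (h + 1) := M_succ_h (by omega) (by omega)
    have h2 := ih (by omega)
    omega

lemma M_diag_ge {b : ℕ} (hb : 1 ≤ b) : 2 * b - 1 ≤ M b b := by
  rcases eq_or_lt_of_le hb with h | h
  · have := M_ge_self b b; omega
  · have h1 : (b - 1) + M b 1 ≤ M b b :=
      M_ge_tree (by omega) le_rfl (by omega) le_rfl (by omega) (by omega)
    rw [M_h_one] at h1
    omega

/-- The right-hand-side set of the recursion, phrased with `M`. -/
def Rset (a : ℕ) : Set ℕ :=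
  {m | ∃ f : ℕ, a ≤ 2 * f ∧ f < a ∧ m = M f f + M (a - f) (a - f) + (a - f)}

lemma mem_Rset_le {a : ℕ} (ha : 2 ≤ a) : ∀ n ∈ Rset a, n ≤ M a a := by
  rintro n ⟨f, h1, h2, rfl⟩
  have hf1 : 1 ≤ f := by omega
  have hg1 : 1 ≤ a - f := by omega
  have hgf : a - f ≤ f := by omega
  have t1 : (a - f) + M a f ≤ M a a :=
    M_ge_tree hg1 hf1 (by omega) le_rfl (by omega) (by omega)
  have t2 : M f (min f f) + M (a - f) (min (a - f) f) ≤ M a f := M_ge_split f hf1 h2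
  rw [min_self, min_eq_left hgf] at t2
  omega

lemma Rset_nonempty {a : ℕ} (ha : 2 ≤ a) : (Rset a).Nonempty :=
  ⟨M (a - 1) (a - 1) + M (a - (a - 1)) (a - (a - 1)) + (a - (a - 1)),
    ⟨a - 1, by omega, by omega, rfl⟩⟩

lemma Rset_bdd {a : ℕ} (ha : 2 ≤ a) : BddAbove (Rset a) :=
  ⟨M a a, fun n hn => mem_Rset_le ha n hn⟩

lemma twoa_le_Rsup {a : ℕ} (ha : 2 ≤ a) : 2 * a - 1 ≤ sSup (Rset a) := by
  have hmem : M (a - 1) (a - 1) + M (a - (a - 1)) (a - (a - 1)) + (a - (a - 1)) ∈ Rset a :=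
    ⟨a - 1, by omega, by omega, rfl⟩
  have h1 : 2 * (a - 1) - 1 ≤ M (a - 1) (a - 1) := M_diag_ge (by omega)
  have h2 : 1 ≤ M (a - (a - 1)) (a - (a - 1)) := by
    have := M_ge_self (a - (a - 1)) (a - (a - 1)); omega
  have h3 := le_csSup (Rset_bdd ha) hmem
  omega

lemma split_term_le {a h' f : ℕ} (ha : 2 ≤ a) (h2 : 2 ≤ h') (h3 : h' ≤ a)
    (hf1 : 1 ≤ f) (hf2 : f < a) :
    (a - h') + (M f (min f h') + M (a - f) (min (a - f) h')) ≤ sSup (Rset a) := by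
  -- wlog 2*f ≥ a
  suffices H : ∀ f, 1 ≤ f → f < a → a ≤ 2 * f →
      (a - h') + (M f (min f h') + M (a - f) (min (a - f) h')) ≤ sSup (Rset a) by
    rcases le_or_gt a (2 * f) with hc | hc
    · exact H f hf1 hf2 hc
    · have := H (a - f) (by omega) (by omega) (by omega)
      rw [(by omega : a - (a - f) = f)] at this
      omega
  clear hf1 hf2 f
  intro f hf1 hf2 hff
  have hgf : a - f ≤ f := by omega
  have hmem : M f f + M (a - f) (a - f) + (a - f) ∈ Rset a := ⟨f, hff, hf2, rfl⟩
  have hsup := le_csSup (Rset_bdd ha) hmem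
  rcases le_or_gt f h' with hc | hc
  · rw [min_eq_left hc, min_eq_left (by omega : a - f ≤ h')]
    omega
  · rw [min_eq_right (by omega : h' ≤ f)]
    have e1 : M f h' + (f - h') ≤ M f f := M_add_le (by omega) (by omega) le_rfl
    have e2 : M (a - f) (min (a - f) h') ≤ M (a - f) (a - f) := M_mono_h (by omega)
    omega

lemma M_le_Rsup {a : ℕ} (ha : 2 ≤ a) : ∀ h, 1 ≤ h → h ≤ a →
    (a - h) + M a h ≤ sSup (Rset a) := by
  intro h hh
  induction h, hh using Nat.le_induction with
  | base =>
    intro _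
    rw [M_h_one]
    have := twoa_le_Rsup ha
    omega
  | succ h hh ih =>
    intro hha
    have IH := ih (by omega)
    -- unroll M a (h+1)
    have hu : M a (h + 1) ≤ max (max a ((Finset.Ico 1 a).sup fun f =>
        M f (min f (h + 1)) + M (a - f) (min (a - f) (h + 1)))) (1 + M a h) := by
      refine M_le (le_trans (le_max_left _ _) (le_max_left _ _)) ?_ ?_
      · intro f h1 h2
        refine le_trans ?_ (le_trans (le_max_right _ _) (le_max_left _ _))
        exact Finset.le_sup (f := fun f => M f (min f (h + 1)) + M (a - f) (min (a - f) (h + 1)))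
          (Finset.mem_Ico.2 ⟨h1, h2⟩)
      · intro ℓ m s h1 h2 h3 h4 h5 h6
        refine le_trans ?_ (le_max_right _ _)
        have e1 : M s m ≤ M a m := M_mono_a h2 h3 h4
        have e2 : M a m + (ℓ + m - 1 - m) ≤ M a (ℓ + m - 1) :=
          M_add_le h2 (by omega) (by omega)
        have e3 : M a (ℓ + m - 1) ≤ M a h := M_mono_h (by omega)
        omega
    have hS : (a - (h + 1)) + ((Finset.Ico 1 a).sup fun f =>
        M f (min f (h + 1)) + M (a - f) (min (a - f) (h + 1))) ≤ sSup (Rset a) := by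
      have hne : (Finset.Ico 1 a).Nonempty := ⟨1, Finset.mem_Ico.2 ⟨le_rfl, by omega⟩⟩
      obtain ⟨f, hfmem, hfeq⟩ := Finset.exists_mem_eq_sup (Finset.Ico 1 a) hne
        (fun f => M f (min f (h + 1)) + M (a - f) (min (a - f) (h + 1)))
      rw [hfeq]
      rw [Finset.mem_Ico] at hfmem
      exact split_term_le ha (by omega) hha hfmem.1 hfmem.2
    have hA := twoa_le_Rsup ha
    rcases max_cases (max a ((Finset.Ico 1 a).sup fun f =>
        M f (min f (h + 1)) + M (a - f) (min (a - f) (h + 1)))) (1 + M a h) with ⟨he, _⟩ | ⟨he, _⟩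
    · rw [he] at hu
      rcases max_cases a ((Finset.Ico 1 a).sup fun f =>
          M f (min f (h + 1)) + M (a - f) (min (a - f) (h + 1))) with ⟨he2, _⟩ | ⟨he2, _⟩
      · rw [he2] at hu; omega
      · rw [he2] at hu; omega
    · rw [he] at hu; omega

lemma M_eq_Rsup {a : ℕ} (ha : 2 ≤ a) : M a a = sSup (Rset a) := by
  refine le_antisymm ?_ (csSup_le (Rset_nonempty ha) (mem_Rset_le ha))
  have := M_le_Rsup ha a (by omega) le_rfl
  omega
section FinsetSide

variable {α : Type*} [PartialOrder α]

/-- `ao` of a finite subset of a poset. -/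
noncomputable def aoF (S : Finset α) : ℕ :=
  sSup {m | ∃ U ⊆ S, IsChainUnion U ∧ U.card = m}

/-- height of a finite subset of a poset. -/
noncomputable def htF (S : Finset α) : ℕ :=
  sSup {m | ∃ C ⊆ S, IsChain (· ≤ ·) (↑C : Set α) ∧ C.card = m}

lemma IsChainUnion.subset {U V : Finset α} (h : IsChainUnion V) (hUV : U ⊆ V) :
    IsChainUnion U := fun x hx y hy z hz h1 h2 =>
  h x (hUV hx) y (hUV hy) z (hUV hz) h1 h2

lemma isChainUnion_empty : IsChainUnion (∅ : Finset α) := by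
  intro x hx; simp at hx

lemma IsChain.isChainUnion {C : Finset α} (h : IsChain (· ≤ ·) (↑C : Set α)) :
    IsChainUnion C := by
  intro x hx y hy z hz _ _
  rcases eq_or_ne x z with rfl | hne
  · exact Or.inl le_rfl
  · exact h (Finset.mem_coe.2 hx) (Finset.mem_coe.2 hz) hne

lemma aoF_bddAbove (S : Finset α) :
    BddAbove {m | ∃ U ⊆ S, IsChainUnion U ∧ U.card = m} := by
  refine ⟨S.card, ?_⟩
  rintro m ⟨U, hU, _, rfl⟩
  exact Finset.card_le_card hU

lemma htF_bddAbove (S : Finset α) :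
    BddAbove {m | ∃ C ⊆ S, IsChain (· ≤ ·) (↑C : Set α) ∧ C.card = m} := by
  refine ⟨S.card, ?_⟩
  rintro m ⟨C, hC, _, rfl⟩
  exact Finset.card_le_card hC

lemma exists_aoF (S : Finset α) : ∃ U ⊆ S, IsChainUnion U ∧ U.card = aoF S := by
  have := Nat.sSup_mem (s := {m | ∃ U ⊆ S, IsChainUnion U ∧ U.card = m})
    ⟨0, ∅, Finset.empty_subset _, isChainUnion_empty, Finset.card_empty⟩ (aoF_bddAbove S)
  exact this

lemma exists_htF (S : Finset α) : ∃ C ⊆ S, IsChain (· ≤ ·) (↑C : Set α) ∧ C.card = htF S := by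
  have := Nat.sSup_mem (s := {m | ∃ C ⊆ S, IsChain (· ≤ ·) (↑C : Set α) ∧ C.card = m})
    ⟨0, ∅, Finset.empty_subset _, by simp, Finset.card_empty⟩ (htF_bddAbove S)
  exact this

lemma le_aoF {S U : Finset α} (hU : U ⊆ S) (h : IsChainUnion U) : U.card ≤ aoF S :=
  le_csSup (aoF_bddAbove S) ⟨U, hU, h, rfl⟩

lemma le_htF {S C : Finset α} (hC : C ⊆ S) (h : IsChain (· ≤ ·) (↑C : Set α)) :
    C.card ≤ htF S :=
  le_csSup (htF_bddAbove S) ⟨C, hC, h, rfl⟩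

lemma aoF_le {S : Finset α} {n : ℕ} (h : ∀ U ⊆ S, IsChainUnion U → U.card ≤ n) :
    aoF S ≤ n := by
  refine csSup_le ⟨0, ∅, Finset.empty_subset _, isChainUnion_empty, Finset.card_empty⟩ ?_
  rintro m ⟨U, hU, hcu, rfl⟩
  exact h U hU hcu

lemma htF_le {S : Finset α} {n : ℕ}
    (h : ∀ C ⊆ S, IsChain (· ≤ ·) (↑C : Set α) → C.card ≤ n) : htF S ≤ n := by
  refine csSup_le ⟨0, ∅, Finset.empty_subset _, by simp, Finset.card_empty⟩ ?_
  rintro m ⟨C, hC, hch, rfl⟩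
  exact h C hC hch

lemma aoF_le_card (S : Finset α) : aoF S ≤ S.card :=
  aoF_le fun _ hU _ => Finset.card_le_card hU

lemma htF_le_aoF (S : Finset α) : htF S ≤ aoF S := by
  obtain ⟨C, hCS, hch, hcard⟩ := exists_htF S
  rw [← hcard]
  exact le_aoF hCS hch.isChainUnion

lemma aoF_mono {S T : Finset α} (h : S ⊆ T) : aoF S ≤ aoF T :=
  aoF_le fun U hU hcu => le_aoF (hU.trans h) hcu

lemma htF_mono {S T : Finset α} (h : S ⊆ T) : htF S ≤ htF T :=
  htF_le fun C hC hch => le_htF (hC.trans h) hch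

lemma one_le_htF {S : Finset α} (h : S.Nonempty) : 1 ≤ htF S := by
  obtain ⟨x, hx⟩ := h
  have : ({x} : Finset α).card ≤ htF S := le_htF (Finset.singleton_subset_iff.2 hx) (by simp)
  simpa using this

lemma aoF_eq_card_of_chain {S : Finset α} (h : IsChain (· ≤ ·) (↑S : Set α)) :
    aoF S = S.card :=
  le_antisymm (aoF_le_card S) (le_aoF subset_rfl h.isChainUnion)

section Union

variable [DecidableEq α] {U V : Finset α} (hdis : Disjoint U V)
  (hinc : ∀ x ∈ U, ∀ y ∈ V, ¬(x ≤ y ∨ y ≤ x))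
include hdis hinc

lemma aoF_union : aoF (U ∪ V) = aoF U + aoF V := by
  classical
  refine le_antisymm ?_ ?_
  · refine aoF_le fun W hW hcu => ?_
    have h1 : W = (W ∩ U) ∪ (W ∩ V) := by
      rw [← Finset.inter_union_distrib_left]
      exact (Finset.inter_eq_left.2 hW).symm
    have h2 : Disjoint (W ∩ U) (W ∩ V) :=
      (hdis.mono Finset.inter_subset_right Finset.inter_subset_right)
    rw [h1, Finset.card_union_of_disjoint h2]
    exact Nat.add_le_add
      (le_aoF Finset.inter_subset_right (hcu.subset Finset.inter_subset_left))
      (le_aoF Finset.inter_subset_right (hcu.subset Finset.inter_subset_left))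
  · obtain ⟨U1, hU1, hcu1, hc1⟩ := exists_aoF U
    obtain ⟨V1, hV1, hcu2, hc2⟩ := exists_aoF V
    have hd : Disjoint U1 V1 := hdis.mono hU1 hV1
    have hcross : ∀ x ∈ U1, ∀ y ∈ V1, ¬(x ≤ y ∨ y ≤ x) := fun x hx y hy =>
      hinc x (hU1 hx) y (hV1 hy)
    have hcu : IsChainUnion (U1 ∪ V1) := by
      intro x hx y hy z hz h1 h2
      rcases Finset.mem_union.1 hx with hx1 | hx1 <;>
        rcases Finset.mem_union.1 hy with hy1 | hy1 <;>
        rcases Finset.mem_union.1 hz with hz1 | hz1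
      · exact hcu1 x hx1 y hy1 z hz1 h1 h2
      · exact absurd h2 (hcross y hy1 z hz1)
      · exact absurd h1 (hcross x hx1 y hy1)
      · exact absurd h1 (hcross x hx1 y hy1)
      · exact absurd h1 ((fun h => hcross y hy1 x hx1 h.symm) : _)
      · exact absurd h1 ((fun h => hcross y hy1 x hx1 h.symm) : _)
      · exact absurd h2 ((fun h => hcross z hz1 y hy1 h.symm) : _)
      · exact hcu2 x hx1 y hy1 z hz1 h1 h2
    have hsub : U1 ∪ V1 ⊆ U ∪ V := Finset.union_subset_union hU1 hV1
    have := le_aoF hsub hcu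
    rw [Finset.card_union_of_disjoint hd, hc1, hc2] at this
    exact this

lemma htF_union : htF (U ∪ V) = max (htF U) (htF V) := by
  classical
  refine le_antisymm ?_ (max_le (htF_mono Finset.subset_union_left)
    (htF_mono Finset.subset_union_right))
  refine htF_le fun C hC hch => ?_
  rcases (C ∩ U).eq_empty_or_nonempty with he | ⟨u, hu⟩
  · have : C ⊆ V := by
      intro x hx
      rcases Finset.mem_union.1 (hC hx) with h1 | h1
      · exact absurd (Finset.mem_inter.2 ⟨hx, h1⟩) (by simp [he])
      · exact h1
    exact le_max_of_le_right (le_htF this hch)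
  · have hCU : C ⊆ U := by
      intro x hx
      rcases Finset.mem_union.1 (hC hx) with h1 | h1
      · exact h1
      · -- x ∈ V, u ∈ C ∩ U : both in chain C, comparable, but cross-incomparable
        exfalso
        have hu1 := Finset.mem_inter.1 hu
        have hne : u ≠ x := by
          rintro rfl
          exact Finset.disjoint_left.1 hdis hu1.2 h1
        have := hch (Finset.mem_coe.2 hu1.1) (Finset.mem_coe.2 hx) hne
        exact hinc u hu1.2 x h1 this
    exact le_max_of_le_left (le_htF hCU hch)

end Union

section ChainTop

variable [DecidableEq α] {C B : Finset α} (hdis : Disjoint C B) (hC : IsChain (· ≤ ·) (↑C : Set α))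
  (hcomp : ∀ c ∈ C, ∀ x ∈ C ∪ B, c ≤ x ∨ x ≤ c)
include hdis hC hcomp

lemma htF_chainTop : htF (C ∪ B) = C.card + htF B := by
  classical
  refine le_antisymm ?_ ?_
  · refine htF_le fun K hK hch => ?_
    have h1 : K = (K ∩ C) ∪ (K ∩ B) := by
      rw [← Finset.inter_union_distrib_left]
      exact (Finset.inter_eq_left.2 hK).symm
    have h2 : Disjoint (K ∩ C) (K ∩ B) :=
      hdis.mono Finset.inter_subset_right Finset.inter_subset_right
    rw [h1, Finset.card_union_of_disjoint h2]
    refine Nat.add_le_add (Finset.card_le_card Finset.inter_subset_right) ?_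
    refine le_htF Finset.inter_subset_right ?_
    intro x hx y hy hne
    exact hch (Finset.mem_coe.2 (Finset.mem_of_mem_inter_left (Finset.mem_coe.1 hx)))
      (Finset.mem_coe.2 (Finset.mem_of_mem_inter_left (Finset.mem_coe.1 hy))) hne
  · obtain ⟨K, hKB, hch, hcard⟩ := exists_htF B
    have hd : Disjoint C K := hdis.mono_right hKB
    have hchain : IsChain (· ≤ ·) (↑(C ∪ K) : Set α) := by
      intro x hx y hy hne
      rcases Finset.mem_union.1 (Finset.mem_coe.1 hx) with h1 | h1 <;>
        rcases Finset.mem_union.1 (Finset.mem_coe.1 hy) with h2 | h2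
      · exact hC h1 h2 hne
      · exact hcomp x h1 y (Finset.mem_union_right _ (hKB h2))
      · exact Or.symm (hcomp y h2 x (Finset.mem_union_right _ (hKB h1)))
      · exact hch h1 h2 hne
    have := le_htF (Finset.union_subset_union subset_rfl hKB) hchain
    rw [Finset.card_union_of_disjoint hd, hcard] at this
    exact this

lemma aoF_chainTop : aoF (C ∪ B) = max (aoF B) (C.card + htF B) := by
  classical
  refine le_antisymm ?_ (max_le (aoF_mono Finset.subset_union_right)
    (htF_chainTop hdis hC hcomp ▸ htF_le_aoF (C ∪ B)))
  refine aoF_le fun W hW hcu => ?_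
  rcases (W ∩ C).eq_empty_or_nonempty with he | ⟨c, hc⟩
  · have : W ⊆ B := by
      intro x hx
      rcases Finset.mem_union.1 (hW hx) with h1 | h1
      · exact absurd (Finset.mem_inter.2 ⟨hx, h1⟩) (by simp [he])
      · exact h1
    exact le_max_of_le_left (le_aoF this hcu)
  · have hc1 := Finset.mem_inter.1 hc
    have hchain : IsChain (· ≤ ·) (↑W : Set α) := by
      intro x hx y hy hne
      have hcx := hcomp c hc1.2 x (hW (Finset.mem_coe.1 hx))
      have hcy := hcomp c hc1.2 y (hW (Finset.mem_coe.1 hy))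
      exact hcu x (Finset.mem_coe.1 hx) c hc1.1 y (Finset.mem_coe.1 hy) (Or.symm hcx) hcy
    have := le_htF hW hchain
    rw [htF_chainTop hdis hC hcomp] at this
    exact le_max_of_le_right this

end ChainTop

/-- `V`-freeness restricted to a finite subset. -/
def VFreeOn (S : Finset α) : Prop :=
  ∀ x ∈ S, ∀ y ∈ S, ∀ z ∈ S, x < y → x < z → (y ≤ z ∨ z ≤ y)

lemma VFreeOn.subset {S T : Finset α} (h : VFreeOn T) (hST : S ⊆ T) : VFreeOn S :=
  fun x hx y hy z hz h1 h2 => h x (hST hx) y (hST hy) z (hST hz) h1 h2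

end FinsetSide
section UpperBound

variable {α : Type*} [PartialOrder α] [DecidableEq α]

theorem card_le_M : ∀ (n : ℕ) (S : Finset α), S.card = n → VFreeOn S →
    S.card ≤ M (aoF S) (htF S) := by
  intro n
  induction n using Nat.strong_induction_on with
  | _ n ih =>
    intro S hcard hV
    classical
    rcases S.eq_empty_or_nonempty with rfl | hS
    · simp
    by_cases hsplit : ∃ U, U ⊆ S ∧ U.Nonempty ∧ (S \ U).Nonempty ∧
        ∀ x ∈ U, ∀ y ∈ S \ U, ¬(x ≤ y ∨ y ≤ x)
    · obtain ⟨U, hUS, hUne, hVne, hinc⟩ := hsplit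
      set V := S \ U with hVdef
      have hdis : Disjoint U V := Finset.disjoint_sdiff
      have hSU : S = U ∪ V := (Finset.union_sdiff_of_subset hUS).symm
      have hcardS : S.card = U.card + V.card := by
        rw [hSU, Finset.card_union_of_disjoint hdis]
      have haoS : aoF S = aoF U + aoF V := by rw [hSU]; exact aoF_union hdis hinc
      have hhtS : htF S = max (htF U) (htF V) := by rw [hSU]; exact htF_union hdis hinc
      have hU1 : 1 ≤ aoF U := le_trans (one_le_htF hUne) (htF_le_aoF U)
      have hV1 : 1 ≤ aoF V := le_trans (one_le_htF hVne) (htF_le_aoF V)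
      have ihU : U.card ≤ M (aoF U) (htF U) := by
        refine ih U.card ?_ U rfl (hV.subset hUS)
        have := Finset.card_pos.2 hVne
        omega
      have ihV : V.card ≤ M (aoF V) (htF V) := by
        refine ih V.card ?_ V rfl (hV.subset (Finset.sdiff_subset))
        have := Finset.card_pos.2 hUne
        omega
      have hmU : M (aoF U) (htF U) ≤ M (aoF U) (min (aoF U) (htF S)) := by
        refine M_mono_h (le_min (htF_le_aoF U) ?_)
        rw [hhtS]; exact le_max_left _ _
      have hmV : M (aoF V) (htF V) ≤ M (aoF V) (min (aoF V) (htF S)) := by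
        refine M_mono_h (le_min (htF_le_aoF V) ?_)
        rw [hhtS]; exact le_max_right _ _
      have hsplitle : M (aoF U) (min (aoF U) (htF S)) +
          M (aoF S - aoF U) (min (aoF S - aoF U) (htF S)) ≤ M (aoF S) (htF S) :=
        M_ge_split (aoF U) hU1 (by omega)
      have heq : aoF S - aoF U = aoF V := by omega
      rw [heq] at hsplitle
      omega
    · push_neg at hsplit
      obtain ⟨r, hrS, hrmax⟩ := S.exists_maximal hS
      set U := S.filter (· ≤ r) with hUdef
      have hUS : U ⊆ S := Finset.filter_subset _ _
      have hrU : r ∈ U := Finset.mem_filter.2 ⟨hrS, le_rfl⟩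
      have hX : ∀ x ∈ U, ∀ y ∈ S \ U, ¬(x ≤ y ∨ y ≤ x) := by
        intro x hx y hy hc
        have hx1 := Finset.mem_filter.1 hx
        have hy1 := Finset.mem_sdiff.1 hy
        have hyr : ¬ y ≤ r := fun h => hy1.2 (Finset.mem_filter.2 ⟨hy1.1, h⟩)
        rcases hc with hxy | hyx
        · have hne : x ≠ y := by rintro rfl; exact hyr hx1.2
          have hxy' : x < y := lt_of_le_of_ne hxy hne
          rcases eq_or_lt_of_le hx1.2 with rfl | hxr
          · exact hxy'.not_ge (hrmax hy1.1 hxy'.le)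
          · rcases hV x hx1.1 y hy1.1 r hrS hxy' hxr with h | h
            · exact hyr h
            · have : y ≠ r := fun h' => hyr (h' ▸ le_rfl)
              exact this (le_antisymm (hrmax hy1.1 h) h)
        · exact hyr (le_trans hyx hx1.2)
      have hVe : S \ U = ∅ := by
        by_contra hne
        obtain ⟨x, hx, y, hy, hc⟩ := hsplit U hUS ⟨r, hrU⟩
          (Finset.nonempty_iff_ne_empty.2 hne)
        exact hX x hx y hy hc
      have hall : ∀ x ∈ S, x ≤ r := by
        intro x hx
        have : x ∈ U := by
          have := Finset.sdiff_eq_empty_iff_subset.1 hVe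
          exact this hx
        exact (Finset.mem_filter.1 this).2
      set C := S.filter (fun c => ∀ x ∈ S, c ≤ x ∨ x ≤ c) with hCdef
      have hCS : C ⊆ S := Finset.filter_subset _ _
      have hrC : r ∈ C := Finset.mem_filter.2 ⟨hrS, fun x hx => Or.inr (hall x hx)⟩
      set B := S \ C with hBdef
      have hdis : Disjoint C B := Finset.disjoint_sdiff
      have hSC : S = C ∪ B := (Finset.union_sdiff_of_subset hCS).symm
      have hCchain : IsChain (· ≤ ·) (↑C : Set α) := by
        intro x hx y hy _
        exact (Finset.mem_filter.1 (Finset.mem_coe.1 hx)).2 y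
          (hCS (Finset.mem_coe.1 hy))
      have hcomp : ∀ c ∈ C, ∀ x ∈ C ∪ B, c ≤ x ∨ x ≤ c := by
        intro c hc x hx
        exact (Finset.mem_filter.1 hc).2 x (hSC ▸ hx)
      rcases B.eq_empty_or_nonempty with hBe | hBne
      · -- S is a chain
        have hSchain : IsChain (· ≤ ·) (↑S : Set α) := by
          have : S = C := by rw [hSC, hBe, Finset.union_empty]
          rw [this]; exact hCchain
        have h1 : aoF S = S.card := aoF_eq_card_of_chain hSchain
        have := M_ge_self (aoF S) (htF S)
        omega
      · have hcardS : S.card = C.card + B.card := by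
          rw [hSC, Finset.card_union_of_disjoint hdis]
        have hht : htF S = C.card + htF B := by
          rw [hSC]; exact htF_chainTop hdis hCchain hcomp
        have hao : aoF S = max (aoF B) (C.card + htF B) := by
          rw [hSC]; exact aoF_chainTop hdis hCchain hcomp
        have hC1 : 1 ≤ C.card := Finset.card_pos.2 ⟨r, hrC⟩
        have hB1 : 1 ≤ htF B := one_le_htF hBne
        have ihB : B.card ≤ M (aoF B) (htF B) := by
          refine ih B.card ?_ B rfl (hV.subset Finset.sdiff_subset)
          omega
        have htree : C.card + M (aoF B) (htF B) ≤ M (aoF S) (htF S) :=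
          M_ge_tree hC1 hB1 (htF_le_aoF B) (aoF_mono (hSC ▸ Finset.subset_union_right))
            (le_of_eq hht.symm) hao.symm
        omega

end UpperBound
section TypeLevel

variable {α : Type*} {β : Type*}

lemma ao_eq_aoF [Fintype α] [PartialOrder α] : ao α = aoF (Finset.univ : Finset α) := by
  unfold ao aoF
  congr 1
  ext m
  exact ⟨fun ⟨U, h1, h2⟩ => ⟨U, Finset.subset_univ U, h1, h2⟩,
    fun ⟨U, _, h1, h2⟩ => ⟨U, h1, h2⟩⟩

lemma heightP_eq_htF [Fintype α] [PartialOrder α] :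
    heightP α = htF (Finset.univ : Finset α) := by
  unfold heightP htF
  congr 1
  ext m
  exact ⟨fun ⟨C, h1, h2⟩ => ⟨C, Finset.subset_univ C, h1, h2⟩,
    fun ⟨C, _, h1, h2⟩ => ⟨C, h1, h2⟩⟩

lemma vfree_iff_vfreeOn [Fintype α] [PartialOrder α] :
    VFree α ↔ VFreeOn (Finset.univ : Finset α) := by
  constructor
  · intro h x _ y _ z _ h1 h2
    by_contra hc
    exact h ⟨x, y, z, h1, h2, hc⟩
  · rintro h ⟨x, y, z, h1, h2, hc⟩
    exact hc (h x (Finset.mem_univ x) y (Finset.mem_univ y) z (Finset.mem_univ z) h1 h2)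

lemma isChainUnion_map [PartialOrder α] [PartialOrder β] (f : α ↪o β) {U : Finset α}
    (h : IsChainUnion U) : IsChainUnion (U.map f.toEmbedding) := by
  intro x hx y hy z hz h1 h2
  obtain ⟨x0, hx0, rfl⟩ := Finset.mem_map.1 hx
  obtain ⟨y0, hy0, rfl⟩ := Finset.mem_map.1 hy
  obtain ⟨z0, hz0, rfl⟩ := Finset.mem_map.1 hz
  simp only [RelEmbedding.coe_toEmbedding, f.le_iff_le] at h1 h2 ⊢
  exact h x0 hx0 y0 hy0 z0 hz0 h1 h2

lemma aoF_map [PartialOrder α] [PartialOrder β] (f : α ↪o β) (S : Finset α) :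
    aoF (S.map f.toEmbedding) = aoF S := by
  refine le_antisymm ?_ ?_
  · refine aoF_le fun V hV hcu => ?_
    obtain ⟨U, hU, rfl⟩ := Finset.subset_map_iff.1 hV
    rw [Finset.card_map]
    refine le_aoF hU ?_
    intro x hx y hy z hz h1 h2
    have := hcu (f x) (Finset.mem_map_of_mem _ hx) (f y) (Finset.mem_map_of_mem _ hy)
      (f z) (Finset.mem_map_of_mem _ hz)
    simp only [f.le_iff_le] at this
    exact this h1 h2
  · obtain ⟨U, hU, hcu, hcard⟩ := exists_aoF S
    rw [← hcard, ← Finset.card_map f.toEmbedding]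
    exact le_aoF (Finset.map_subset_map.2 hU) (isChainUnion_map f hcu)

lemma htF_map [PartialOrder α] [PartialOrder β] (f : α ↪o β) (S : Finset α) :
    htF (S.map f.toEmbedding) = htF S := by
  refine le_antisymm ?_ ?_
  · refine htF_le fun V hV hch => ?_
    obtain ⟨U, hU, rfl⟩ := Finset.subset_map_iff.1 hV
    rw [Finset.card_map]
    refine le_htF hU ?_
    intro x hx y hy hne
    have := hch (Finset.mem_coe.2 (Finset.mem_map_of_mem f.toEmbedding (Finset.mem_coe.1 hx)))
      (Finset.mem_coe.2 (Finset.mem_map_of_mem f.toEmbedding (Finset.mem_coe.1 hy)))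
      (fun hc => hne (f.injective hc))
    simpa only [RelEmbedding.coe_toEmbedding, f.le_iff_le] using this
  · obtain ⟨C, hC, hch, hcard⟩ := exists_htF S
    rw [← hcard, ← Finset.card_map f.toEmbedding]
    refine le_htF (Finset.map_subset_map.2 hC) ?_
    intro x hx y hy hne
    obtain ⟨x0, hx0, rfl⟩ := Finset.mem_map.1 (Finset.mem_coe.1 hx)
    obtain ⟨y0, hy0, rfl⟩ := Finset.mem_map.1 (Finset.mem_coe.1 hy)
    simp only [RelEmbedding.coe_toEmbedding, f.le_iff_le]
    exact hch (Finset.mem_coe.2 hx0) (Finset.mem_coe.2 hy0) (fun hc => hne (by rw [hc]))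

end TypeLevel
section Constructions

variable {α β : Type*}

lemma vfree_of_linear [LinearOrder α] : VFree α := by
  rintro ⟨p1, p2, p3, _, _, hc⟩
  exact hc (le_total p2 p3)

lemma ao_of_linear [Fintype α] [LinearOrder α] : ao α = Fintype.card α := by
  rw [ao_eq_aoF, ← Finset.card_univ]
  exact aoF_eq_card_of_chain (fun x _ y _ _ => le_total x y)

lemma heightP_of_linear [Fintype α] [LinearOrder α] : heightP α = Fintype.card α := by
  rw [heightP_eq_htF, ← Finset.card_univ]
  refine le_antisymm (le_trans (htF_le_aoF _) (aoF_le_card _)) ?_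
  exact le_htF subset_rfl (fun x _ y _ _ => le_total x y)

/-- The discrete (antichain) order. -/
def discretePO (n : ℕ) : PartialOrder (Fin n) where
  le x y := x = y
  lt _ _ := False
  le_refl _ := rfl
  le_trans _ _ _ h1 h2 := by exact Eq.trans h1 h2
  le_antisymm _ _ h _ := h
  lt_iff_le_not_ge := by
    intro a b
    constructor
    · exact fun h => h.elim
    · rintro ⟨h1, h2⟩
      exact h2 (Eq.symm h1)

lemma vfree_discrete (n : ℕ) : @VFree (Fin n) (discretePO n) := by
  rintro ⟨p1, p2, p3, h1, _, _⟩
  exact h1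

lemma ao_discrete (n : ℕ) : @ao (Fin n) (Fin.fintype n) (discretePO n) = n := by
  letI := discretePO n
  rw [@ao_eq_aoF (Fin n) (Fin.fintype n) (discretePO n)]
  have h1 : @aoF (Fin n) (discretePO n) Finset.univ = (Finset.univ : Finset (Fin n)).card := by
    refine le_antisymm (aoF_le_card _) (le_aoF subset_rfl ?_)
    intro x _ y _ z _ h1 h2
    have hxy : x = y := by rcases h1 with h | h; exact h; exact h.symm
    have hyz : y = z := by rcases h2 with h | h; exact h; exact h.symm
    exact Or.inl (show x = z from hxy.trans hyz)
  rw [h1, Finset.card_univ, Fintype.card_fin]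

lemma heightP_discrete (n : ℕ) (hn : 1 ≤ n) :
    @heightP (Fin n) (Fin.fintype n) (discretePO n) = 1 := by
  letI := discretePO n
  rw [@heightP_eq_htF (Fin n) (Fin.fintype n) (discretePO n)]
  refine le_antisymm (htF_le fun C _ hch => ?_) (one_le_htF ⟨⟨0, hn⟩, Finset.mem_univ _⟩)
  refine Finset.card_le_one.2 fun x hx y hy => ?_
  by_contra hne
  rcases hch (Finset.mem_coe.2 hx) (Finset.mem_coe.2 hy) hne with h | h
  · exact hne h
  · exact hne h.symm

section DisjointSum

variable [PartialOrder α] [PartialOrder β]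

/-- `Sum.inl` as an order embedding. -/
def inlOE : α ↪o α ⊕ β := ⟨⟨Sum.inl, Sum.inl_injective⟩, Sum.inl_le_inl_iff⟩

/-- `Sum.inr` as an order embedding. -/
def inrOE : β ↪o α ⊕ β := ⟨⟨Sum.inr, Sum.inr_injective⟩, Sum.inr_le_inr_iff⟩

variable [Fintype α] [Fintype β]

lemma univ_sum_decomp [DecidableEq (α ⊕ β)] : (Finset.univ : Finset (α ⊕ β)) =
    (Finset.univ.map (inlOE (α := α) (β := β)).toEmbedding) ∪
    (Finset.univ.map (inrOE (α := α) (β := β)).toEmbedding) := by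
  ext x
  simp only [Finset.mem_univ, true_iff, Finset.mem_union, Finset.mem_map]
  rcases x with a | b
  · exact Or.inl ⟨a, trivial, rfl⟩
  · exact Or.inr ⟨b, trivial, rfl⟩

lemma sum_dis [DecidableEq (α ⊕ β)] :
    Disjoint (Finset.univ.map (inlOE (α := α) (β := β)).toEmbedding)
      (Finset.univ.map (inrOE (α := α) (β := β)).toEmbedding) := by
  rw [Finset.disjoint_left]
  rintro x hx hy
  obtain ⟨a, _, rfl⟩ := Finset.mem_map.1 hx
  obtain ⟨b, _, hb⟩ := Finset.mem_map.1 hy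
  exact Sum.inl_ne_inr hb.symm

lemma sum_inc : ∀ x ∈ (Finset.univ.map (inlOE (α := α) (β := β)).toEmbedding),
    ∀ y ∈ (Finset.univ.map (inrOE (α := α) (β := β)).toEmbedding), ¬(x ≤ y ∨ y ≤ x) := by
  rintro x hx y hy hc
  obtain ⟨a, _, rfl⟩ := Finset.mem_map.1 hx
  obtain ⟨b, _, rfl⟩ := Finset.mem_map.1 hy
  rcases hc with h | h
  · exact Sum.not_inl_le_inr h
  · exact Sum.not_inr_le_inl h

lemma ao_sum : ao (α ⊕ β) = ao α + ao β := by
  classical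
  rw [ao_eq_aoF, univ_sum_decomp, aoF_union sum_dis sum_inc, aoF_map, aoF_map,
    ← ao_eq_aoF, ← ao_eq_aoF]

lemma heightP_sum : heightP (α ⊕ β) = max (heightP α) (heightP β) := by
  classical
  rw [heightP_eq_htF, univ_sum_decomp, htF_union sum_dis sum_inc, htF_map, htF_map,
    ← heightP_eq_htF, ← heightP_eq_htF]

lemma vfree_sum (hA : VFree α) (hB : VFree β) : VFree (α ⊕ β) := by
  rintro ⟨p1, p2, p3, h1, h2, hc⟩
  rcases p1 with a1 | b1
  · have hp2 : ∃ a2, p2 = Sum.inl a2 := by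
      rcases p2 with a2 | b2
      · exact ⟨a2, rfl⟩
      · exact absurd h1.le Sum.not_inl_le_inr
    have hp3 : ∃ a3, p3 = Sum.inl a3 := by
      rcases p3 with a3 | b3
      · exact ⟨a3, rfl⟩
      · exact absurd h2.le Sum.not_inl_le_inr
    obtain ⟨a2, rfl⟩ := hp2
    obtain ⟨a3, rfl⟩ := hp3
    refine hA ⟨a1, a2, a3, ?_, ?_, ?_⟩
    · exact Sum.inl_lt_inl_iff.1 h1
    · exact Sum.inl_lt_inl_iff.1 h2
    · intro hcc
      refine hc ?_
      rcases hcc with h | h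
      · exact Or.inl (Sum.inl_le_inl_iff.2 h)
      · exact Or.inr (Sum.inl_le_inl_iff.2 h)
  · have hp2 : ∃ b2, p2 = Sum.inr b2 := by
      rcases p2 with a2 | b2
      · exact absurd h1.le Sum.not_inr_le_inl
      · exact ⟨b2, rfl⟩
    have hp3 : ∃ b3, p3 = Sum.inr b3 := by
      rcases p3 with a3 | b3
      · exact absurd h2.le Sum.not_inr_le_inl
      · exact ⟨b3, rfl⟩
    obtain ⟨b2, rfl⟩ := hp2
    obtain ⟨b3, rfl⟩ := hp3
    refine hB ⟨b1, b2, b3, ?_, ?_, ?_⟩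
    · exact Sum.inr_lt_inr_iff.1 h1
    · exact Sum.inr_lt_inr_iff.1 h2
    · intro hcc
      refine hc ?_
      rcases hcc with h | h
      · exact Or.inl (Sum.inr_le_inr_iff.2 h)
      · exact Or.inr (Sum.inr_le_inr_iff.2 h)

end DisjointSum

section LexSum

variable [PartialOrder α] [LinearOrder β]

/-- `Sum.inl` into a lexicographic sum, as an order embedding. -/
def inlLexOE : α ↪o α ⊕ₗ β :=
  ⟨⟨fun a => toLex (Sum.inl a), fun a b h => Sum.inl_injective (toLex.injective h)⟩,
    Sum.Lex.inl_le_inl_iff⟩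

/-- `Sum.inr` into a lexicographic sum, as an order embedding. -/
def inrLexOE : β ↪o α ⊕ₗ β :=
  ⟨⟨fun b => toLex (Sum.inr b), fun a b h => Sum.inr_injective (toLex.injective h)⟩,
    Sum.Lex.inr_le_inr_iff⟩

variable [Fintype α] [Fintype β]

lemma univ_lex_decomp [DecidableEq (α ⊕ₗ β)] : (Finset.univ : Finset (α ⊕ₗ β)) =
    (Finset.univ.map (inrLexOE (α := α) (β := β)).toEmbedding) ∪
    (Finset.univ.map (inlLexOE (α := α) (β := β)).toEmbedding) := by
  ext x
  simp only [Finset.mem_univ, true_iff, Finset.mem_union, Finset.mem_map]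
  rcases x with a | b
  · exact Or.inr ⟨a, trivial, rfl⟩
  · exact Or.inl ⟨b, trivial, rfl⟩

lemma lex_dis [DecidableEq (α ⊕ₗ β)] :
    Disjoint (Finset.univ.map (inrLexOE (α := α) (β := β)).toEmbedding)
      (Finset.univ.map (inlLexOE (α := α) (β := β)).toEmbedding) := by
  rw [Finset.disjoint_left]
  rintro x hx hy
  obtain ⟨b, _, rfl⟩ := Finset.mem_map.1 hx
  obtain ⟨a, _, ha⟩ := Finset.mem_map.1 hy
  exact Sum.inl_ne_inr (congrArg ofLex ha)

lemma lex_chain : IsChain (· ≤ ·)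
    (↑(Finset.univ.map (inrLexOE (α := α) (β := β)).toEmbedding) : Set (α ⊕ₗ β)) := by
  intro x hx y hy _
  obtain ⟨b1, _, rfl⟩ := Finset.mem_map.1 (Finset.mem_coe.1 hx)
  obtain ⟨b2, _, rfl⟩ := Finset.mem_map.1 (Finset.mem_coe.1 hy)
  rcases le_total b1 b2 with h | h
  · exact Or.inl (Sum.Lex.inr_le_inr_iff.2 h)
  · exact Or.inr (Sum.Lex.inr_le_inr_iff.2 h)

lemma lex_comp [DecidableEq (α ⊕ₗ β)] :
    ∀ c ∈ (Finset.univ.map (inrLexOE (α := α) (β := β)).toEmbedding),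
    ∀ x ∈ (Finset.univ.map (inrLexOE (α := α) (β := β)).toEmbedding) ∪
      (Finset.univ.map (inlLexOE (α := α) (β := β)).toEmbedding), c ≤ x ∨ x ≤ c := by
  intro c hc x _
  obtain ⟨b, _, rfl⟩ := Finset.mem_map.1 hc
  rcases x with a | b2
  · exact Or.inr (Sum.Lex.inl_le_inr a b)
  · rcases le_total b b2 with h | h
    · exact Or.inl (Sum.Lex.inr_le_inr_iff.2 h)
    · exact Or.inr (Sum.Lex.inr_le_inr_iff.2 h)

lemma ao_lex : ao (α ⊕ₗ β) = max (ao α) (Fintype.card β + heightP α) := by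
  classical
  rw [ao_eq_aoF, univ_lex_decomp, aoF_chainTop lex_dis lex_chain lex_comp, aoF_map, htF_map,
    ← ao_eq_aoF, ← heightP_eq_htF, Finset.card_map, Finset.card_univ]

lemma heightP_lex : heightP (α ⊕ₗ β) = Fintype.card β + heightP α := by
  classical
  rw [heightP_eq_htF, univ_lex_decomp, htF_chainTop lex_dis lex_chain lex_comp, htF_map,
    ← heightP_eq_htF, Finset.card_map, Finset.card_univ]

lemma vfree_lex (hA : VFree α) : VFree (α ⊕ₗ β) := by
  rintro ⟨p1, p2, p3, h1, h2, hc⟩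
  rcases p2 with a2 | b2
  · rcases p3 with a3 | b3
    · -- both inl
      have hp1 : ∃ a1, p1 = toLex (Sum.inl a1) := by
        rcases p1 with a1 | b1
        · exact ⟨a1, rfl⟩
        · exact absurd h1.le Sum.Lex.not_inr_le_inl
      obtain ⟨a1, rfl⟩ := hp1
      refine hA ⟨a1, a2, a3, ?_, ?_, ?_⟩
      · exact Sum.Lex.inl_lt_inl_iff.1 h1
      · exact Sum.Lex.inl_lt_inl_iff.1 h2
      · intro hcc
        refine hc ?_
        rcases hcc with h | h
        · exact Or.inl (Sum.Lex.inl_le_inl_iff.2 h)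
        · exact Or.inr (Sum.Lex.inl_le_inl_iff.2 h)
    · exact hc (Or.inl (Sum.Lex.inl_le_inr a2 b3))
  · rcases p3 with a3 | b3
    · exact hc (Or.inr (Sum.Lex.inl_le_inr a3 b2))
    · rcases le_total b2 b3 with h | h
      · exact hc (Or.inl (Sum.Lex.inr_le_inr_iff.2 h))
      · exact hc (Or.inr (Sum.Lex.inr_le_inr_iff.2 h))
end LexSum

/-- Transport a finite poset to `Fin (card)`. -/
lemma transport (β : Type*) [Fintype β] [PartialOrder β] :
    ∃ P : PartialOrder (Fin (Fintype.card β)),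
      (@VFree _ P ↔ VFree β) ∧ @ao _ (Fin.fintype _) P = ao β ∧
      @heightP _ (Fin.fintype _) P = heightP β := by
  set n := Fintype.card β
  let e : Fin n ≃ β := (Fintype.equivFin β).symm
  letI P : PartialOrder (Fin n) := PartialOrder.lift e e.injective
  refine ⟨P, ?_, ?_, ?_⟩
  · constructor
    · intro h
      rintro ⟨p1, p2, p3, h1, h2, hc⟩
      refine h ⟨e.symm p1, e.symm p2, e.symm p3, ?_, ?_, ?_⟩
      · rw [@lt_iff_le_not_ge _ (@PartialOrder.toPreorder _ P)]
        constructor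
        · show e (e.symm p1) ≤ e (e.symm p2)
          rw [e.apply_symm_apply, e.apply_symm_apply]; exact h1.le
        · intro hcc
          have : e (e.symm p2) ≤ e (e.symm p1) := hcc
          rw [e.apply_symm_apply, e.apply_symm_apply] at this
          exact absurd this (not_le_of_gt h1)
      · rw [@lt_iff_le_not_ge _ (@PartialOrder.toPreorder _ P)]
        constructor
        · show e (e.symm p1) ≤ e (e.symm p3)
          rw [e.apply_symm_apply, e.apply_symm_apply]; exact h2.le
        · intro hcc
          have : e (e.symm p3) ≤ e (e.symm p1) := hcc
          rw [e.apply_symm_apply, e.apply_symm_apply] at this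
          exact absurd this (not_le_of_gt h2)
      · intro hcc
        refine hc ?_
        rcases hcc with h' | h'
        · have : e (e.symm p2) ≤ e (e.symm p3) := h'
          rw [e.apply_symm_apply, e.apply_symm_apply] at this
          exact Or.inl this
        · have : e (e.symm p3) ≤ e (e.symm p2) := h'
          rw [e.apply_symm_apply, e.apply_symm_apply] at this
          exact Or.inr this
    · intro h
      rintro ⟨p1, p2, p3, h1, h2, hc⟩
      refine h ⟨e p1, e p2, e p3, ?_, ?_, ?_⟩
      · rcases (@lt_iff_le_not_ge _ (@PartialOrder.toPreorder _ P) p1 p2).1 h1 with ⟨ha, hb⟩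
        exact lt_iff_le_not_ge.2 ⟨ha, hb⟩
      · rcases (@lt_iff_le_not_ge _ (@PartialOrder.toPreorder _ P) p1 p3).1 h2 with ⟨ha, hb⟩
        exact lt_iff_le_not_ge.2 ⟨ha, hb⟩
      · exact fun hcc => hc hcc
  · let f : @OrderEmbedding (Fin n) β (@PartialOrder.toPreorder _ P).toLE _ :=
      ⟨e.toEmbedding, Iff.rfl⟩
    have h1 : (Finset.univ : Finset (Fin n)).map f.toEmbedding = Finset.univ := by
      ext x
      simp only [Finset.mem_univ, iff_true, Finset.mem_map]
      exact ⟨e.symm x, trivial, e.apply_symm_apply x⟩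
    have := @aoF_map (Fin n) β P _ f Finset.univ
    rw [h1] at this
    rw [@ao_eq_aoF _ (Fin.fintype n) P, ao_eq_aoF, ← this]
  · let f : @OrderEmbedding (Fin n) β (@PartialOrder.toPreorder _ P).toLE _ :=
      ⟨e.toEmbedding, Iff.rfl⟩
    have h1 : (Finset.univ : Finset (Fin n)).map f.toEmbedding = Finset.univ := by
      ext x
      simp only [Finset.mem_univ, iff_true, Finset.mem_map]
      exact ⟨e.symm x, trivial, e.apply_symm_apply x⟩
    have := @htF_map (Fin n) β P _ f Finset.univ
    rw [h1] at this
    rw [@heightP_eq_htF _ (Fin.fintype n) P, heightP_eq_htF, ← this]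

end Constructions
section LowerBound

/-- Transport a finite poset onto `Fin n`. -/
lemma transport' (β : Type*) [Fintype β] [PartialOrder β] (n : ℕ) (hn : Fintype.card β = n) :
    ∃ P : PartialOrder (Fin n),
      (@VFree _ P ↔ VFree β) ∧ @ao _ (Fin.fintype _) P = ao β ∧
      @heightP _ (Fin.fintype _) P = heightP β := by
  subst hn; exact transport β

theorem exists_witness : ∀ (k a h : ℕ), a + h = k → 1 ≤ h → h ≤ a →
    ∃ P : PartialOrder (Fin (M a h)), @VFree _ P ∧ @ao _ (Fin.fintype _) P = a ∧
      @heightP _ (Fin.fintype _) P ≤ h := by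
  intro k
  induction k using Nat.strong_induction_on with
  | _ k ih =>
    intro a h hk h1 h2
    have hM : M a h = max a (max
        ((Finset.Ico 1 a).attach.sup fun f =>
          M f.1 (min f.1 h) + M (a - f.1) (min (a - f.1) h))
        ((treeIdx a h).attach.sup fun p => p.1.1 + M p.1.2.2 p.1.2.1)) := by
      conv_lhs => rw [M]
    rcases max_cases a (max
        ((Finset.Ico 1 a).attach.sup fun f =>
          M f.1 (min f.1 h) + M (a - f.1) (min (a - f.1) h))
        ((treeIdx a h).attach.sup fun p => p.1.1 + M p.1.2.2 p.1.2.1)) with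
      ⟨hv, _⟩ | ⟨hv, _⟩
    · -- base case : M a h = a
      rw [hM, hv]
      rcases eq_or_lt_of_le h2 with rfl | hha
      · -- pure chain
        obtain ⟨P, hV, hao, hht⟩ := transport' (Fin h) h (by simp)
        exact ⟨P, hV.2 vfree_of_linear, by rw [hao, ao_of_linear]; simp,
          by rw [hht, heightP_of_linear]; simp⟩
      · -- chain of length h ⊔ antichain of size a - h
        letI Pd := discretePO (a - h)
        obtain ⟨P, hV, hao, hht⟩ := transport' (Fin h ⊕ Fin (a - h)) a
          (by rw [Fintype.card_sum]; simp; omega)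
        refine ⟨P, hV.2 (vfree_sum vfree_of_linear (vfree_discrete _)), ?_, ?_⟩
        · rw [hao, ao_sum, ao_of_linear, ao_discrete]
          simp; omega
        · rw [hht, heightP_sum, heightP_of_linear, heightP_discrete _ (by omega)]
          simp; omega
    · rcases max_cases
          ((Finset.Ico 1 a).attach.sup fun f =>
            M f.1 (min f.1 h) + M (a - f.1) (min (a - f.1) h))
          ((treeIdx a h).attach.sup fun p => p.1.1 + M p.1.2.2 p.1.2.1) with
        ⟨hv2, _⟩ | ⟨hv2, _⟩
      · -- split case
        have hSval : M a h = ((Finset.Ico 1 a).attach.sup fun f =>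
            M f.1 (min f.1 h) + M (a - f.1) (min (a - f.1) h)) := hM.trans (hv.trans hv2)
        rcases (Finset.Ico 1 a).attach.eq_empty_or_nonempty with he | hne
        · exfalso
          rw [he, Finset.sup_empty] at hSval
          rw [show (⊥ : ℕ) = 0 from rfl] at hSval
          have := M_ge_self a h
          omega
        obtain ⟨⟨f, hf⟩, _, heq⟩ := Finset.exists_mem_eq_sup _ hne
          (fun f : {x // x ∈ Finset.Ico 1 a} =>
            M f.1 (min f.1 h) + M (a - f.1) (min (a - f.1) h))
        rw [Finset.mem_Ico] at hf
        have hSval' : M a h = M f (min f h) + M (a - f) (min (a - f) h) :=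
          hSval.trans heq
        have hg1 : 1 ≤ a - f := by omega
        obtain ⟨P1, hV1, hao1, hht1⟩ := ih (f + min f h) (by omega) f (min f h) rfl
          (by omega) (by omega)
        obtain ⟨P2, hV2, hao2, hht2⟩ := ih ((a - f) + min (a - f) h) (by omega)
          (a - f) (min (a - f) h) rfl (by omega) (by omega)
        letI := P1
        letI := P2
        rw [hSval']
        obtain ⟨P, hV, hao, hht⟩ := transport'
          (Fin (M f (min f h)) ⊕ Fin (M (a - f) (min (a - f) h)))
          (M f (min f h) + M (a - f) (min (a - f) h))
          (by rw [Fintype.card_sum]; simp)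
        refine ⟨P, hV.2 (vfree_sum hV1 hV2), ?_, ?_⟩
        · rw [hao, ao_sum, hao1, hao2]; omega
        · rw [hht, heightP_sum, max_le_iff]
          constructor
          · exact le_trans hht1 (by omega)
          · exact le_trans hht2 (by omega)
      · -- tree case
        have hTval : M a h = ((treeIdx a h).attach.sup fun p =>
            p.1.1 + M p.1.2.2 p.1.2.1) := hM.trans (hv.trans hv2)
        rcases (treeIdx a h).attach.eq_empty_or_nonempty with he | hne
        · exfalso
          rw [he, Finset.sup_empty] at hTval
          rw [show (⊥ : ℕ) = 0 from rfl] at hTval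
          have := M_ge_self a h
          omega
        obtain ⟨⟨⟨ℓ, m, s⟩, hp⟩, _, heq⟩ := Finset.exists_mem_eq_sup _ hne
          (fun p : {x // x ∈ treeIdx a h} => p.1.1 + M p.1.2.2 p.1.2.1)
        have hTval' : M a h = ℓ + M s m := hTval.trans heq
        obtain ⟨hpℓ, hpm, hpms, hpsa, hplh, hpmax⟩ :
            1 ≤ ℓ ∧ 1 ≤ m ∧ m ≤ s ∧ s ≤ a ∧ ℓ + m ≤ h ∧ max s (ℓ + m) = a :=
          mem_treeIdx.1 hp
        obtain ⟨PB, hVB, haoB, hhtB⟩ := ih (s + m) (by omega) s m rfl (by omega) hpms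
        letI := PB
        -- exact height of the witness
        have hhtB' : @heightP _ (Fin.fintype _) PB = m := by
          rcases eq_or_lt_of_le hhtB with he' | hlt
          · exact he'
          · exfalso
            have hub := card_le_M (Finset.univ : Finset (Fin (M s m))).card
              Finset.univ rfl (vfree_iff_vfreeOn.1 hVB)
            rw [← ao_eq_aoF, ← heightP_eq_htF, haoB, Finset.card_univ, Fintype.card_fin] at hub
            have hMs : 1 ≤ M s m := le_trans (by omega) (M_ge_self s m)
            have hht1 : 1 ≤ @heightP _ (Fin.fintype _) PB := by
              rw [heightP_eq_htF]
              exact one_le_htF ⟨⟨0, hMs⟩, Finset.mem_univ _⟩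
            have := M_add_le (a := s) (m := @heightP _ (Fin.fintype _) PB) (h := m)
              hht1 (by omega) (by omega)
            omega
        rw [hTval']
        obtain ⟨P, hV, hao, hht⟩ := transport' (Fin (M s m) ⊕ₗ Fin ℓ) (ℓ + M s m)
          (by rw [Fintype.card_congr (toLex (α := Fin (M s m) ⊕ Fin ℓ)).symm,
                Fintype.card_sum]; simp; omega)
        refine ⟨P, hV.2 (vfree_lex hVB), ?_, ?_⟩
        · rw [hao, ao_lex, haoB, hhtB', Fintype.card_fin]
          omega
        · rw [hht, heightP_lex, hhtB', Fintype.card_fin]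
          omega

lemma Lam_eq_M {a h : ℕ} (h1 : 1 ≤ h) (h2 : h ≤ a) : Lam a h = M a h := by
  have hub : ∀ n ∈ {n | ∃ P : PartialOrder (Fin n), @VFree (Fin n) P ∧
      @ao (Fin n) (Fin.fintype n) P = a ∧ @heightP (Fin n) (Fin.fintype n) P ≤ h},
      n ≤ M a h := by
    rintro n ⟨P, hV, hao, hht⟩
    letI := P
    have hub := card_le_M (Finset.univ : Finset (Fin n)).card
      Finset.univ rfl (vfree_iff_vfreeOn.1 hV)
    rw [← ao_eq_aoF, ← heightP_eq_htF, hao, Finset.card_univ, Fintype.card_fin] at hub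
    exact le_trans hub (M_mono_h hht)
  obtain ⟨P, hV, hao, hht⟩ := exists_witness (a + h) a h rfl h1 h2
  have hmem : M a h ∈ {n | ∃ P : PartialOrder (Fin n), @VFree (Fin n) P ∧
      @ao (Fin n) (Fin.fintype n) P = a ∧ @heightP (Fin n) (Fin.fintype n) P ≤ h} :=
    ⟨P, hV, hao, hht⟩
  exact le_antisymm (csSup_le ⟨M a h, hmem⟩ hub) (le_csSup ⟨M a h, hub⟩ hmem)

end LowerBound
/-- for `a ≥ 2`,
`Λ(a) = max { Λ(f) + Λ(a−f) + (a−f) : a/2 ≤ f < a }`. -/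
theorem Lambda_recursion (a : ℕ) (ha : 2 ≤ a) :
    Lambda a = sSup {m | ∃ f : ℕ, a ≤ 2 * f ∧ f < a ∧
      m = Lambda f + Lambda (a - f) + (a - f)} := by
  have h1 : Lambda a = M a a := Lam_eq_M (by omega) le_rfl
  have hset : {m | ∃ f : ℕ, a ≤ 2 * f ∧ f < a ∧
      m = Lambda f + Lambda (a - f) + (a - f)} = Rset a := by
    ext m
    constructor
    · rintro ⟨f, hf1, hf2, rfl⟩
      refine ⟨f, hf1, hf2, ?_⟩
      rw [show Lambda f = M f f from Lam_eq_M (by omega) le_rfl,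
        show Lambda (a - f) = M (a - f) (a - f) from Lam_eq_M (by omega) le_rfl]
    · rintro ⟨f, hf1, hf2, rfl⟩
      refine ⟨f, hf1, hf2, ?_⟩
      rw [show Lambda f = M f f from Lam_eq_M (by omega) le_rfl,
        show Lambda (a - f) = M (a - f) (a - f) from Lam_eq_M (by omega) le_rfl]
  rw [h1, hset]
  exact M_eq_Rsup ha
end

section
/- For any a ≥ 2, writing α = ⌈log₂ a⌉ − 1, we have Λ(a) = Λ(2^α) + Λ(a − 2^α) + (a − 2^α). -/
namespace AOAux

/-- binary digit sum -/
def s2 (n : ℕ) : ℕ :=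
  if n = 0 then 0 else n % 2 + s2 (n / 2)
decreasing_by exact Nat.div_lt_self (Nat.pos_of_ne_zero (by assumption)) one_lt_two

lemma s2_zero : s2 0 = 0 := by rw [s2]; simp

lemma s2_two_mul (k : ℕ) : s2 (2 * k) = s2 k := by
  rcases Nat.eq_zero_or_pos k with rfl | hk
  · simp
  · rw [s2]
    have h2 : 2 * k ≠ 0 := by omega
    simp [h2, Nat.mul_div_cancel_left _ (by norm_num : 0 < 2), Nat.mul_mod_right]

lemma s2_two_mul_add_one (k : ℕ) : s2 (2 * k + 1) = s2 k + 1 := by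
  rw [s2]
  have h2 : 2 * k + 1 ≠ 0 := by omega
  rw [if_neg h2]
  have h3 : (2 * k + 1) % 2 = 1 := by omega
  have h4 : (2 * k + 1) / 2 = k := by omega
  rw [h3, h4]
  omega

lemma s2_pos : ∀ (n : ℕ), 1 ≤ n → 1 ≤ s2 n := by
  intro n
  induction n using Nat.strong_induction_on with
  | _ n ih =>
    intro hn
    rw [s2]
    have h0 : n ≠ 0 := by omega
    simp only [h0, if_false]
    rcases Nat.even_or_odd n with ⟨k, hk⟩ | ⟨k, hk⟩
    · have hk1 : 1 ≤ k := by omega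
      have hik := ih k (by omega) hk1
      have hdiv : n / 2 = k := by omega
      rw [hdiv]
      omega
    · omega

/-- partial sums of binary digit sums -/
def Cf (n : ℕ) : ℕ := ∑ k ∈ Finset.range n, s2 k

lemma Cf_zero : Cf 0 = 0 := by simp [Cf]

lemma Cf_succ (n : ℕ) : Cf (n + 1) = Cf n + s2 n := by
  simp [Cf, Finset.sum_range_succ]

lemma Cf_one : Cf 1 = 0 := by simp [Cf_succ, Cf_zero, s2_zero]

lemma Cf_two_mul (d : ℕ) : Cf (2 * d) = 2 * Cf d + d := by
  induction d with
  | zero => simp [Cf_zero]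
  | succ d ih =>
    have h1 : 2 * (d + 1) = 2 * d + 1 + 1 := by ring
    rw [h1, Cf_succ, Cf_succ, ih, s2_two_mul, s2_two_mul_add_one, Cf_succ]
    ring

lemma Cf_two_mul_add_one (d : ℕ) : Cf (2 * d + 1) = Cf (d + 1) + Cf d + d := by
  rw [Cf_succ, Cf_two_mul, s2_two_mul, Cf_succ]
  ring

lemma Cf_mono {m n : ℕ} (h : m ≤ n) : Cf m ≤ Cf n := by
  unfold Cf
  exact Finset.sum_le_sum_of_subset (Finset.range_subset_range.2 h)

lemma Cf_succ_ge (n : ℕ) (hn : 1 ≤ n) : Cf n + 1 ≤ Cf (n + 1) := by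
  rw [Cf_succ]
  have := s2_pos n hn
  omega

/-- Key numeric lemma, asymmetric version. -/
lemma knl_aux : ∀ s : ℕ, ∀ a b : ℕ, a + b = s → 1 ≤ a → a ≤ b →
    Cf a + Cf b + a ≤ Cf (a + b) := by
  intro s
  induction s using Nat.strong_induction_on with
  | _ s ih =>
    intro a b hs ha hab
    rcases eq_or_lt_of_le hab with rfl | hlt
    · -- a = b
      have h : a + a = 2 * a := by ring
      rw [h, Cf_two_mul]
      omega
    rcases eq_or_lt_of_le ha with rfl | ha2
    · -- a = 1
      have h1 : Cf 1 = 0 := Cf_one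
      have h2 : Cf (1 + b) = Cf b + s2 b := by
        rw [Nat.add_comm 1 b, Cf_succ]
      have := s2_pos b (by omega)
      omega
    -- 2 ≤ a < b
    rcases Nat.even_or_odd a with ⟨d, hd⟩ | ⟨d, hd⟩ <;>
      rcases Nat.even_or_odd b with ⟨c, hc⟩ | ⟨c, hc⟩
    · -- a = 2d, b = 2c
      have hd' : a = 2 * d := by omega
      have hc' : b = 2 * c := by omega
      subst hd'; subst hc'
      have hsum : 2 * d + 2 * c = 2 * (d + c) := by ring
      rw [hsum, Cf_two_mul, Cf_two_mul, Cf_two_mul]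
      have h1 := ih (d + c) (by omega) d c rfl (by omega) (by omega)
      omega
    · -- a = 2d, b = 2c+1
      have hd' : a = 2 * d := by omega
      have hc' : b = 2 * c + 1 := by omega
      subst hd'; subst hc'
      have hsum : 2 * d + (2 * c + 1) = 2 * (d + c) + 1 := by ring
      rw [hsum, Cf_two_mul, Cf_two_mul_add_one, Cf_two_mul_add_one]
      have h1 : Cf d + Cf (c + 1) + d ≤ Cf (d + (c + 1)) :=
        ih (d + (c + 1)) (by omega) d (c + 1) rfl (by omega) (by omega)
      have h2 : Cf d + Cf c + d ≤ Cf (d + c) :=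
        ih (d + c) (by omega) d c rfl (by omega) (by omega)
      have h3 : d + (c + 1) = d + c + 1 := by ring
      rw [h3] at h1
      omega
    · -- a = 2d+1, b = 2c
      have hd' : a = 2 * d + 1 := by omega
      have hc' : b = 2 * c := by omega
      subst hd'; subst hc'
      have hsum : 2 * d + 1 + 2 * c = 2 * (d + c) + 1 := by ring
      rw [hsum, Cf_two_mul_add_one, Cf_two_mul_add_one, Cf_two_mul]
      have h1 : Cf (d + 1) + Cf c + (d + 1) ≤ Cf (d + 1 + c) :=
        ih (d + 1 + c) (by omega) (d + 1) c rfl (by omega) (by omega)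
      have h2 : Cf d + Cf c + d ≤ Cf (d + c) :=
        ih (d + c) (by omega) d c rfl (by omega) (by omega)
      have h3 : d + 1 + c = d + c + 1 := by ring
      rw [h3] at h1
      omega
    · -- a = 2d+1, b = 2c+1
      have hd' : a = 2 * d + 1 := by omega
      have hc' : b = 2 * c + 1 := by omega
      subst hd'; subst hc'
      have hsum : 2 * d + 1 + (2 * c + 1) = 2 * (d + c + 1) := by ring
      rw [hsum, Cf_two_mul_add_one, Cf_two_mul_add_one, Cf_two_mul]
      have h1 : Cf (d + 1) + Cf c + (d + 1) ≤ Cf (d + 1 + c) :=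
        ih (d + 1 + c) (by omega) (d + 1) c rfl (by omega) (by omega)
      have h2 : Cf d + Cf (c + 1) + d ≤ Cf (d + (c + 1)) :=
        ih (d + (c + 1)) (by omega) d (c + 1) rfl (by omega) (by omega)
      have h3 : d + 1 + c = d + c + 1 := by ring
      have h4 : d + (c + 1) = d + c + 1 := by ring
      rw [h3] at h1; rw [h4] at h2
      omega

lemma knl {a b : ℕ} (ha : 1 ≤ a) (hb : 1 ≤ b) :
    Cf a + Cf b + min a b ≤ Cf (a + b) := by
  rcases le_total a b with h | h
  · have := knl_aux (a + b) a b rfl ha h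
    omega
  · have := knl_aux (a + b) b a (by omega) hb h
    rw [Nat.add_comm b a] at this
    omega

lemma s2_pow_add : ∀ t : ℕ, ∀ j : ℕ, j < 2 ^ t → s2 (2 ^ t + j) = s2 j + 1 := by
  intro t
  induction t with
  | zero =>
    intro j hj
    interval_cases j
    · rw [show (2:ℕ) ^ 0 + 0 = 2 * 0 + 1 by norm_num, s2_two_mul_add_one, s2_zero]
  | succ t ih =>
    intro j hj
    rcases Nat.even_or_odd j with ⟨i, hi⟩ | ⟨i, hi⟩
    · have h1 : 2 ^ (t + 1) + j = 2 * (2 ^ t + i) := by rw [pow_succ]; omega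
      have h2 : j = 2 * i := by omega
      rw [h1, s2_two_mul, ih i (by rw [pow_succ] at hj; omega), h2, s2_two_mul]
    · have h1 : 2 ^ (t + 1) + j = 2 * (2 ^ t + i) + 1 := by rw [pow_succ]; omega
      have h2 : j = 2 * i + 1 := by omega
      rw [h1, s2_two_mul_add_one, ih i (by rw [pow_succ] at hj; omega), h2,
        s2_two_mul_add_one]

lemma Cf_pow_add (t : ℕ) : ∀ q : ℕ, q ≤ 2 ^ t → Cf (2 ^ t + q) = Cf (2 ^ t) + Cf q + q := by
  intro q
  induction q with
  | zero => simp [Cf_zero]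
  | succ q ih =>
    intro hq
    have h1 : 2 ^ t + (q + 1) = (2 ^ t + q) + 1 := by ring
    rw [h1, Cf_succ, ih (by omega), s2_pow_add t q (by omega), Cf_succ]
    ring

/-- the closed form for `Λ`. -/
def Ff (n : ℕ) : ℕ := n + Cf n

end AOAux
namespace AOAux
set_option linter.unusedSectionVars false
set_option linter.unusedVariables false

open Finset

section Basics

variable (α : Type) [Fintype α] [PartialOrder α]

lemma aoSet_nonempty : {m | ∃ U : Finset α, IsChainUnion U ∧ U.card = m}.Nonempty :=
  ⟨0, ∅, fun x hx => absurd hx (Finset.notMem_empty x), Finset.card_empty⟩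

lemma aoSet_bddAbove : BddAbove {m | ∃ U : Finset α, IsChainUnion U ∧ U.card = m} := by
  refine ⟨Fintype.card α, ?_⟩
  rintro m ⟨U, -, rfl⟩
  exact (Finset.card_le_univ U).trans_eq (Finset.card_univ)

lemma htSet_nonempty : {m | ∃ C : Finset α, IsChain (· ≤ ·) (↑C : Set α) ∧ C.card = m}.Nonempty :=
  ⟨0, ∅, by simp [IsChain], Finset.card_empty⟩

lemma htSet_bddAbove :
    BddAbove {m | ∃ C : Finset α, IsChain (· ≤ ·) (↑C : Set α) ∧ C.card = m} := by
  refine ⟨Fintype.card α, ?_⟩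
  rintro m ⟨C, -, rfl⟩
  exact (Finset.card_le_univ C).trans_eq (Finset.card_univ)


variable {α}

lemma le_ao {U : Finset α} (h : IsChainUnion U) : U.card ≤ ao α :=
  le_csSup (aoSet_bddAbove α) ⟨U, h, rfl⟩

lemma ao_le {m : ℕ} (h : ∀ U : Finset α, IsChainUnion U → U.card ≤ m) : ao α ≤ m :=
  csSup_le (aoSet_nonempty α) (by rintro k ⟨U, hU, rfl⟩; exact h U hU)

lemma ao_spec : ∃ U : Finset α, IsChainUnion U ∧ U.card = ao α :=
  Nat.sSup_mem (aoSet_nonempty α) (aoSet_bddAbove α)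

lemma ao_le_card : ao α ≤ Fintype.card α :=
  ao_le fun U _ => (Finset.card_le_univ U).trans_eq (Finset.card_univ)

lemma le_height {C : Finset α} (h : IsChain (· ≤ ·) (↑C : Set α)) : C.card ≤ heightP α :=
  le_csSup (htSet_bddAbove α) ⟨C, h, rfl⟩

lemma height_le {m : ℕ} (h : ∀ C : Finset α, IsChain (· ≤ ·) (↑C : Set α) → C.card ≤ m) :
    heightP α ≤ m :=
  csSup_le (htSet_nonempty α) (by rintro k ⟨C, hC, rfl⟩; exact h C hC)

lemma height_spec : ∃ C : Finset α, IsChain (· ≤ ·) (↑C : Set α) ∧ C.card = heightP α :=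
  Nat.sSup_mem (htSet_nonempty α) (htSet_bddAbove α)

lemma height_le_card : heightP α ≤ Fintype.card α :=
  height_le fun C _ => (Finset.card_le_univ C).trans_eq (Finset.card_univ)

lemma chain_isChainUnion {C : Finset α} (h : IsChain (· ≤ ·) (↑C : Set α)) :
    IsChainUnion C := by
  intro x hx y hy z hz _ _
  rcases eq_or_ne x z with rfl | hne
  · exact Or.inl le_rfl
  · exact h (Finset.mem_coe.2 hx) (Finset.mem_coe.2 hz) hne

lemma height_le_ao : heightP α ≤ ao α :=
  height_le fun C hC => le_ao (chain_isChainUnion hC)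

lemma one_le_ao [Nonempty α] : 1 ≤ ao α := by
  obtain ⟨x⟩ := ‹Nonempty α›
  have h : IsChainUnion ({x} : Finset α) := by
    intro a ha b hb c hc _ _
    rw [Finset.mem_singleton] at ha hc
    subst ha; subst hc
    exact Or.inl le_rfl
  simpa using le_ao h

lemma one_le_height [Nonempty α] : 1 ≤ heightP α := by
  obtain ⟨x⟩ := ‹Nonempty α›
  have h : IsChain (· ≤ ·) (↑({x} : Finset α) : Set α) := by
    simp [IsChain, Set.Pairwise]
  simpa using le_height h

end Basics

section Embed

variable {α β : Type} [Fintype α] [PartialOrder α] [Fintype β] [PartialOrder β]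

/-- transfer `ao` along an order-reflecting injection whose comparability transfers both ways -/
lemma ao_le_of_embed (f : α → β) (hf : Function.Injective f)
    (hiff : ∀ x y : α, f x ≤ f y ↔ x ≤ y) : ao α ≤ ao β := by
  apply ao_le
  intro U hU
  have hcard : U.card = (U.map ⟨f, hf⟩).card := (Finset.card_map _).symm
  rw [hcard]
  apply le_ao
  intro x hx y hy z hz hxy hyz
  rw [Finset.mem_map] at hx hy hz
  obtain ⟨u, hu, rfl⟩ := hx
  obtain ⟨v, hv, rfl⟩ := hy
  obtain ⟨w, hw, rfl⟩ := hz
  simp only [Function.Embedding.coeFn_mk] at *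
  rw [hiff, hiff] at hxy hyz ⊢
  exact hU u hu v hv w hw hxy hyz

lemma height_le_of_embed (f : α → β) (hf : Function.Injective f)
    (hmono : ∀ x y : α, x ≤ y → f x ≤ f y) : heightP α ≤ heightP β := by
  apply height_le
  intro C hC
  have hcard : C.card = (C.map ⟨f, hf⟩).card := (Finset.card_map _).symm
  rw [hcard]
  apply le_height
  rw [Finset.coe_map]
  refine hC.image_of_map_rel _ _ _ ?_
  intro a b h
  exact hmono _ _ h

lemma vfree_of_embed (f : α → β) (hiff : ∀ x y : α, f x ≤ f y ↔ x ≤ y)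
    (hV : VFree β) : VFree α := by
  rintro ⟨p1, p2, p3, h12, h13, hnc⟩
  have hlt : ∀ x y : α, x < y → f x < f y := by
    intro x y hxy
    rw [lt_iff_le_not_ge] at hxy ⊢
    rw [hiff, hiff]
    exact hxy
  exact hV ⟨f p1, f p2, f p3, hlt _ _ h12, hlt _ _ h13, by
    rw [hiff, hiff]; exact hnc⟩

end Embed

end AOAux
namespace AOAux
set_option linter.unusedSectionVars false

open Finset

section Sub

variable {α : Type} [Fintype α] [PartialOrder α]

lemma ao_subtype_le (p : α → Prop) [Fintype (Subtype p)] : ao (Subtype p) ≤ ao α :=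
  ao_le_of_embed Subtype.val Subtype.val_injective (fun _ _ => Subtype.coe_le_coe)

lemma height_subtype_le (p : α → Prop) [Fintype (Subtype p)] :
    heightP (Subtype p) ≤ heightP α :=
  height_le_of_embed Subtype.val Subtype.val_injective
    (fun _ _ h => Subtype.coe_le_coe.2 h)

lemma vfree_subtype (p : α → Prop) [Fintype (Subtype p)] (h : VFree α) : VFree (Subtype p) :=
  vfree_of_embed Subtype.val (fun _ _ => Subtype.coe_le_coe) h

lemma ao_split (p : α → Prop) [DecidablePred p] [Fintype (Subtype p)] [Fintype {x // ¬ p x}]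
    (hinc : ∀ x y : α, p x → ¬ p y → ¬(x ≤ y ∨ y ≤ x)) :
    ao α = ao (Subtype p) + ao {x // ¬ p x} := by
  classical
  apply le_antisymm
  · apply ao_le
    intro U hU
    have hsub : ∀ (q : α → Prop) [DecidablePred q], IsChainUnion (U.subtype q) := by
      intro q _
      intro x hx y hy z hz hxy hyz
      rw [Finset.mem_subtype] at hx hy hz
      have := hU x hx y hy z hz
        (hxy.imp (fun h => Subtype.coe_le_coe.2 h) (fun h => Subtype.coe_le_coe.2 h))
        (hyz.imp (fun h => Subtype.coe_le_coe.2 h) (fun h => Subtype.coe_le_coe.2 h))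
      exact this.imp (fun h => Subtype.coe_le_coe.1 h) (fun h => Subtype.coe_le_coe.1 h)
    have h1 : (U.filter p).card ≤ ao (Subtype p) := by
      rw [← Finset.card_subtype]
      exact le_ao (hsub p)
    have h2 : (U.filter (fun x => ¬ p x)).card ≤ ao {x // ¬ p x} := by
      rw [← Finset.card_subtype]
      exact le_ao (hsub (fun x => ¬ p x))
    have := Finset.card_filter_add_card_filter_not (s := U) (p := p)
    omega
  · obtain ⟨U1, hU1, hc1⟩ := ao_spec (α := Subtype p)
    obtain ⟨U2, hU2, hc2⟩ := ao_spec (α := {x // ¬ p x})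
    set e1 : Subtype p ↪ α := Function.Embedding.subtype p with he1
    set e2 : {x // ¬ p x} ↪ α := Function.Embedding.subtype _ with he2
    have hps : ∀ w ∈ U1.map e1, p w := by
      intro w hw
      rw [Finset.mem_map] at hw
      obtain ⟨u, _, rfl⟩ := hw
      simpa [he1] using u.2
    have hns : ∀ w ∈ U2.map e2, ¬ p w := by
      intro w hw
      rw [Finset.mem_map] at hw
      obtain ⟨u, _, rfl⟩ := hw
      simpa [he2] using u.2
    have hdisj : Disjoint (U1.map e1) (U2.map e2) := by
      rw [Finset.disjoint_left]
      intro w h1 h2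
      exact hns w h2 (hps w h1)
    have hcu : IsChainUnion (U1.map e1 ∪ U2.map e2) := by
      have key : ∀ u v, u ∈ U1.map e1 ∪ U2.map e2 → v ∈ U1.map e1 ∪ U2.map e2 →
          (u ≤ v ∨ v ≤ u) →
          (u ∈ U1.map e1 ∧ v ∈ U1.map e1) ∨ (u ∈ U2.map e2 ∧ v ∈ U2.map e2) := by
        intro u v hu hv huv
        rcases Finset.mem_union.1 hu with hu1 | hu2 <;>
          rcases Finset.mem_union.1 hv with hv1 | hv2
        · exact Or.inl ⟨hu1, hv1⟩
        · exact absurd huv (hinc u v (hps u hu1) (hns v hv2))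
        · exact absurd huv.symm (hinc v u (hps v hv1) (hns u hu2))
        · exact Or.inr ⟨hu2, hv2⟩
      intro x hx y hy z hz hxy hyz
      rcases key x y hx hy hxy with ⟨hx1, hy1⟩ | ⟨hx2, hy2⟩
      · rcases key y z hy hz hyz with ⟨hy1', hz1⟩ | ⟨hy2', _⟩
        · -- all in side 1
          rw [Finset.mem_map] at hx1 hy1 hz1
          obtain ⟨u, hu, rfl⟩ := hx1
          obtain ⟨v, hv, rfl⟩ := hy1
          obtain ⟨w, hw, rfl⟩ := hz1
          simp only [he1, Function.Embedding.coe_subtype] at hxy hyz ⊢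
          have := hU1 u hu v hv w hw
            (hxy.imp (fun h => Subtype.coe_le_coe.1 h) (fun h => Subtype.coe_le_coe.1 h))
            (hyz.imp (fun h => Subtype.coe_le_coe.1 h) (fun h => Subtype.coe_le_coe.1 h))
          exact this.imp (fun h => Subtype.coe_le_coe.2 h) (fun h => Subtype.coe_le_coe.2 h)
        · exact absurd (hps y hy1) (hns y hy2')
      · rcases key y z hy hz hyz with ⟨hy1', _⟩ | ⟨hy2', hz2⟩
        · exact absurd (hps y hy1') (hns y hy2)
        · rw [Finset.mem_map] at hx2 hy2 hz2
          obtain ⟨u, hu, rfl⟩ := hx2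
          obtain ⟨v, hv, rfl⟩ := hy2
          obtain ⟨w, hw, rfl⟩ := hz2
          simp only [he2, Function.Embedding.coe_subtype] at hxy hyz ⊢
          have := hU2 u hu v hv w hw
            (hxy.imp (fun h => Subtype.coe_le_coe.1 h) (fun h => Subtype.coe_le_coe.1 h))
            (hyz.imp (fun h => Subtype.coe_le_coe.1 h) (fun h => Subtype.coe_le_coe.1 h))
          exact this.imp (fun h => Subtype.coe_le_coe.2 h) (fun h => Subtype.coe_le_coe.2 h)
    have := le_ao hcu
    rw [Finset.card_union_of_disjoint hdisj, Finset.card_map, Finset.card_map, hc1, hc2] at this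
    exact this

lemma card_split (p : α → Prop) [DecidablePred p] [Fintype (Subtype p)] [Fintype {x // ¬ p x}] :
    Fintype.card α = Fintype.card (Subtype p) + Fintype.card {x // ¬ p x} := by
  have e1 : Fintype.card (Subtype p) = @Fintype.card _ (Subtype.fintype p) :=
    congrArg (fun i => @Fintype.card _ i) (Subsingleton.elim _ _)
  have e2 : Fintype.card {x // ¬ p x} = @Fintype.card _ (Subtype.fintype _) :=
    congrArg (fun i => @Fintype.card _ i) (Subsingleton.elim _ _)
  have h1 : Fintype.card (Subtype p) = (Finset.univ.filter p).card := by
    convert Fintype.card_subtype p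
  have h2 : Fintype.card {x // ¬ p x} = (Finset.univ.filter (fun x => ¬ p x)).card := by
    convert Fintype.card_subtype (fun x => ¬ p x)
  have h3 := Finset.card_filter_add_card_filter_not
    (s := (Finset.univ : Finset α)) (p := p)
  rw [Finset.card_univ] at h3
  omega

lemma height_peel (m : α) (hm : ∀ x : α, x ≤ m) [Fintype {x // ¬ x = m}] :
    heightP {x // ¬ x = m} + 1 ≤ heightP α := by
  classical
  obtain ⟨C, hC, hcard⟩ := height_spec (α := {x // ¬ x = m})
  set e : {x // x ≠ m} ↪ α := Function.Embedding.subtype _ with he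
  set D := C.map e with hD
  have hmD : m ∉ D := by
    rw [hD, Finset.mem_map]
    rintro ⟨u, _, hu⟩
    exact u.2 (by simpa [he] using hu)
  have hchD : IsChain (· ≤ ·) (↑D : Set α) := by
    rw [hD, Finset.coe_map]
    refine hC.image_of_map_rel _ _ _ ?_
    intro a b h
    exact Subtype.coe_le_coe.2 h
  have hch : IsChain (· ≤ ·) (↑(insert m D) : Set α) := by
    rw [Finset.coe_insert]
    exact hchD.insert (fun b _ _ => Or.inr (hm b))
  have := le_height hch
  rw [Finset.card_insert_of_notMem hmD, Finset.card_map, hcard] at this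
  omega

end Sub

end AOAux
namespace AOAux

set_option linter.unusedSectionVars false
open Finset

lemma exists_maximal' {α : Type} [PartialOrder α] (s : Finset α) (h : s.Nonempty) :
    ∃ m ∈ s, ∀ x ∈ s, ¬ m < x := by
  obtain ⟨m, hm⟩ := Finset.exists_maximal h
  exact ⟨m, hm.1, fun x hx hlt => lt_irrefl _ (lt_of_lt_of_le hlt (hm.2 hx hlt.le))⟩

lemma masterUB : ∀ (N : ℕ) (α : Type) [Fintype α] [PartialOrder α],
    Fintype.card α ≤ N → VFree α →
    Fintype.card α + ao α ≤ Cf (ao α) + ao α + heightP α := by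
  intro N
  induction N with
  | zero =>
    intro α _ _ hcard _
    have h0 : Fintype.card α = 0 := by omega
    have hao : ao α = 0 := by
      have := ao_le_card (α := α)
      omega
    rw [hao, Cf_zero]
    omega
  | succ N ih =>
    intro α _ _ hcard hV
    classical
    rcases Nat.eq_zero_or_pos (Fintype.card α) with h0 | hpos
    · have hao : ao α = 0 := by
        have := ao_le_card (α := α)
        omega
      rw [hao, Cf_zero]
      omega
    haveI hne : Nonempty α := Fintype.card_pos_iff.1 hpos
    obtain ⟨m, -, hmax'⟩ := exists_maximal' (Finset.univ : Finset α) univ_nonempty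
    have hmax : ∀ x : α, ¬ m < x := fun x => hmax' x (mem_univ x)
    have hup : ∀ x : α, ∃ y, x ≤ y ∧ ∀ z, ¬ y < z := by
      intro x
      obtain ⟨y, hy, hymax⟩ :=
        exists_maximal' (Finset.univ.filter (fun z => x ≤ z)) ⟨x, by simp⟩
      refine ⟨y, (Finset.mem_filter.1 hy).2, fun z hz => ?_⟩
      exact hymax z (Finset.mem_filter.2 ⟨mem_univ z,
        le_trans (Finset.mem_filter.1 hy).2 hz.le⟩) hz
    by_cases huniq : ∀ y : α, (∀ z, ¬ y < z) → y = m
    · -- unique maximal element: m is the top, peel it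
      have hm : ∀ x : α, x ≤ m := by
        intro x
        obtain ⟨y, hxy, hymax⟩ := hup x
        rwa [huniq y hymax] at hxy
      have hcs := card_split (α := α) (fun x => x = m)
      have hc1 : Fintype.card {x // x = m} = 1 := Fintype.card_subtype_eq m
      have hIH := ih {x // ¬ x = m} (by omega) (vfree_subtype _ hV)
      have haos := ao_subtype_le (α := α) (fun x => ¬ x = m)
      have hCf := Cf_mono haos
      have hpeel := height_peel m hm
      omega
    · -- at least two maximal elements: split
      push_neg at huniq
      obtain ⟨m', hm'max, hm'ne⟩ := huniq
      set p := fun x : α => x ≤ m with hp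
      have hinc : ∀ x y : α, p x → ¬ p y → ¬ (x ≤ y ∨ y ≤ x) := by
        intro x y hx hy hcomp
        rcases hcomp with hxy | hyx
        · by_cases hxm : x = m
          · subst hxm
            rcases lt_or_eq_of_le hxy with hlt | rfl
            · exact hmax y hlt
            · exact hy le_rfl
          · have hxltm : x < m := lt_of_le_of_ne hx hxm
            have hxlty : x < y := lt_of_le_of_ne hxy (by rintro rfl; exact hy hx)
            have hcomp2 : y ≤ m ∨ m ≤ y := by
              by_contra hn
              exact hV ⟨x, y, m, hxlty, hxltm, hn⟩
            rcases hcomp2 with h | h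
            · exact hy h
            · rcases lt_or_eq_of_le h with hlt | rfl
              · exact hmax y hlt
              · exact hy le_rfl
        · exact hy (le_trans hyx hx)
      haveI hne1 : Nonempty (Subtype p) := ⟨⟨m, le_rfl⟩⟩
      haveI hne2 : Nonempty {x // ¬ p x} := by
        refine ⟨⟨m', ?_⟩⟩
        intro hle
        exact hm'max m (lt_of_le_of_ne hle hm'ne)
      have hao := ao_split p hinc
      have hcs := card_split (α := α) p
      have hc1 : 0 < Fintype.card (Subtype p) := Fintype.card_pos
      have hc2 : 0 < Fintype.card {x // ¬ p x} := Fintype.card_pos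
      have hIH1 := ih (Subtype p) (by omega) (vfree_subtype _ hV)
      have hIH2 := ih {x // ¬ p x} (by omega) (vfree_subtype _ hV)
      have ha1 : 1 ≤ ao (Subtype p) := one_le_ao
      have ha2 : 1 ≤ ao {x // ¬ p x} := one_le_ao
      have hknl := knl ha1 ha2
      have hh1 := height_le_ao (α := Subtype p)
      have hh2 := height_le_ao (α := {x // ¬ p x})
      have hh1' := height_subtype_le (α := α) p
      have hh2' := height_subtype_le (α := α) (fun x => ¬ p x)
      rw [hao]
      omega

/-- upper bound: a `V`-free poset has size at most `Ff (ao)`. -/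
lemma card_le_Ff (α : Type) [Fintype α] [PartialOrder α] (hV : VFree α) :
    Fintype.card α ≤ Ff (ao α) := by
  have h := masterUB (Fintype.card α) α le_rfl hV
  have h2 := height_le_ao (α := α)
  unfold Ff
  omega

end AOAux
namespace AOAux

set_option linter.unusedSectionVars false
open Finset

section Glue

variable {α β : Type} [Fintype α] [PartialOrder α] [Fintype β] [PartialOrder β] {c : ℕ}

/-- the order on the glued poset: a chain `Fin c` sitting above the disjoint union `α ⊕ β`. -/
def gle : (α ⊕ β) ⊕ Fin c → (α ⊕ β) ⊕ Fin c → Prop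
  | .inl (.inl a), .inl (.inl a') => a ≤ a'
  | .inl (.inr b), .inl (.inr b') => b ≤ b'
  | .inl _, .inr _ => True
  | .inr i, .inr j => i ≤ j
  | _, _ => False

/-- the glued partial order -/
def gluePO : PartialOrder ((α ⊕ β) ⊕ Fin c) where
  le := gle
  lt x y := gle x y ∧ ¬ gle y x
  lt_iff_le_not_ge _ _ := Iff.rfl
  le_refl x := by
    rcases x with (a | b) | i
    · exact (le_rfl : a ≤ a)
    · exact (le_rfl : b ≤ b)
    · exact (le_rfl : i ≤ i)
  le_trans x y z hxy hyz := by
    rcases x with (a | b) | i <;> rcases y with (a' | b') | i' <;>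
      rcases z with (a'' | b'') | i''
    all_goals first
      | exact (hxy : False).elim
      | exact (hyz : False).elim
      | trivial
      | exact show a ≤ a'' from le_trans (show a ≤ a' from hxy) (show a' ≤ a'' from hyz)
      | exact show b ≤ b'' from le_trans (show b ≤ b' from hxy) (show b' ≤ b'' from hyz)
      | exact show i ≤ i'' from le_trans (show i ≤ i' from hxy) (show i' ≤ i'' from hyz)
  le_antisymm x y h1 h2 := by
    rcases x with (a | b) | i <;> rcases y with (a' | b') | i'
    all_goals first
      | exact (h1 : False).elim
      | exact (h2 : False).elim
      | rw [le_antisymm (show a ≤ a' from h1) (show a' ≤ a from h2)]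
      | rw [le_antisymm (show b ≤ b' from h1) (show b' ≤ b from h2)]
      | rw [le_antisymm (show i ≤ i' from h1) (show i' ≤ i from h2)]

/-- embedding of `α` into the glued poset -/
def eA : α ↪ (α ⊕ β) ⊕ Fin c := ⟨fun a => .inl (.inl a), fun a a' h => by simpa using h⟩
/-- embedding of `β` into the glued poset -/
def eB : β ↪ (α ⊕ β) ⊕ Fin c := ⟨fun b => .inl (.inr b), fun b b' h => by simpa using h⟩

lemma glue_vfree (hα : VFree α) (hβ : VFree β) :
    @VFree ((α ⊕ β) ⊕ Fin c) (gluePO) := by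
  rintro ⟨x, y, z, hxy, hxz, hnc⟩
  have hxy' : gle x y ∧ ¬ gle y x := hxy
  have hxz' : gle x z ∧ ¬ gle z x := hxz
  have hnc' : ¬ (gle y z ∨ gle z y) := hnc
  clear hxy hxz hnc
  obtain ⟨hxy, hyx⟩ := hxy'
  obtain ⟨hxz, hzx⟩ := hxz'
  rcases x with (a | b) | i <;> rcases y with (a' | b') | i' <;>
    rcases z with (a'' | b'') | i''
  -- kill all cases where one of the `gle` facts is `False`
  all_goals try exact (hxy : False)
  all_goals try exact (hxz : False)
  -- cases where y and z are both in the `Fin c` chain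
  all_goals try exact hnc' ((le_total i' i'').imp (fun h => (h : _)) (fun h => (h : _)))
  -- cases where exactly one of y, z is in the chain: then they are comparable
  all_goals try exact hnc' (Or.inl trivial)
  all_goals try exact hnc' (Or.inr trivial)
  · -- all three in α
    exact hα ⟨a, a', a'',
      lt_iff_le_not_ge.2 ⟨(hxy : a ≤ a'), fun h => hyx (h : _)⟩,
      lt_iff_le_not_ge.2 ⟨(hxz : a ≤ a''), fun h => hzx (h : _)⟩,
      fun h => hnc' (h.imp (fun h' => (h' : _)) (fun h' => (h' : _)))⟩
  · -- all three in β
    exact hβ ⟨b, b', b'',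
      lt_iff_le_not_ge.2 ⟨(hxy : b ≤ b'), fun h => hyx (h : _)⟩,
      lt_iff_le_not_ge.2 ⟨(hxz : b ≤ b''), fun h => hzx (h : _)⟩,
      fun h => hnc' (h.imp (fun h' => (h' : _)) (fun h' => (h' : _)))⟩

lemma glue_height_le :
    @heightP ((α ⊕ β) ⊕ Fin c) _ (gluePO) ≤ c + max (heightP α) (heightP β) := by
  classical
  refine @height_le ((α ⊕ β) ⊕ Fin c) _ gluePO _ ?_
  intro C hC
  have hcomp : ∀ x ∈ C, ∀ y ∈ C, x ≠ y → gle x y ∨ gle y x := by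
    intro x hx y hy hne
    exact hC (Finset.mem_coe.2 hx) (Finset.mem_coe.2 hy) hne
  have hsplit := Finset.card_filter_add_card_filter_not
    (s := C) (p := fun x => (Sum.isRight x = true))
  set CR := C.filter (fun x => (Sum.isRight x = true)) with hCR
  set CL := C.filter (fun x => ¬ (Sum.isRight x = true)) with hCL
  have hR : CR.card ≤ c := by
    have hsub : CR ⊆ (Finset.univ : Finset (Fin c)).map ⟨Sum.inr, Sum.inr_injective⟩ := by
      intro x hx
      rcases x with y | i
      · have := (Finset.mem_filter.1 hx).2
        simp at this
      · simp
    have := Finset.card_le_card hsub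
    simpa using this
  have hCLC : ∀ x ∈ CL, x ∈ C := fun x hx => Finset.filter_subset _ _ hx
  have hL : CL.card ≤ max (heightP α) (heightP β) := by
    by_cases hAB : ∃ b : β, (Sum.inl (Sum.inr b) : (α ⊕ β) ⊕ Fin c) ∈ CL
    · -- all of CL lies in β
      obtain ⟨b0, hb0⟩ := hAB
      have hsub : CL ⊆ (Finset.univ : Finset β).map (eB) := by
        intro x hx
        rcases x with (a | b) | i
        · exfalso
          have hne : (Sum.inl (Sum.inl a) : (α ⊕ β) ⊕ Fin c) ≠ Sum.inl (Sum.inr b0) := by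
            simp
          rcases hcomp _ (hCLC _ hx) _ (hCLC _ hb0) hne with h | h
          · exact (h : False)
          · exact (h : False)
        · exact Finset.mem_map.2 ⟨b, Finset.mem_univ _, rfl⟩
        · have := (Finset.mem_filter.1 hx).2
          simp at this
      obtain ⟨D, hD⟩ : ∃ D : Finset β, D.map eB = CL := by
        refine ⟨CL.preimage (fun b => (eB b : (α ⊕ β) ⊕ Fin c))
          (fun x _ y _ h => eB.injective h), ?_⟩
        ext x
        rw [Finset.mem_map]
        constructor
        · rintro ⟨b, hb, rfl⟩
          exact Finset.mem_preimage.1 hb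
        · intro hx
          have := hsub hx
          rw [Finset.mem_map] at this
          obtain ⟨b, -, rfl⟩ := this
          exact ⟨b, Finset.mem_preimage.2 hx, rfl⟩
      have hDchain : IsChain (· ≤ ·) (↑D : Set β) := by
        intro u hu v hv hne
        have hu' : (eB u : (α ⊕ β) ⊕ Fin c) ∈ CL := by
          rw [← hD]; exact Finset.mem_map_of_mem _ (Finset.mem_coe.1 hu)
        have hv' : (eB v : (α ⊕ β) ⊕ Fin c) ∈ CL := by
          rw [← hD]; exact Finset.mem_map_of_mem _ (Finset.mem_coe.1 hv)
        have hne' : (eB u : (α ⊕ β) ⊕ Fin c) ≠ eB v := fun h => hne (eB.injective h)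
        rcases hcomp _ (hCLC _ hu') _ (hCLC _ hv') hne' with h | h
        · exact Or.inl (h : u ≤ v)
        · exact Or.inr (h : v ≤ u)
      have := le_height hDchain
      have hcardD : D.card = CL.card := by rw [← hD, Finset.card_map]
      omega
    · -- all of CL lies in α
      have hsub : CL ⊆ (Finset.univ : Finset α).map (eA) := by
        intro x hx
        rcases x with (a | b) | i
        · exact Finset.mem_map.2 ⟨a, Finset.mem_univ _, rfl⟩
        · exact absurd ⟨b, hx⟩ hAB
        · have := (Finset.mem_filter.1 hx).2
          simp at this
      obtain ⟨D, hD⟩ : ∃ D : Finset α, D.map eA = CL := by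
        refine ⟨CL.preimage (fun a => (eA a : (α ⊕ β) ⊕ Fin c))
          (fun x _ y _ h => eA.injective h), ?_⟩
        ext x
        rw [Finset.mem_map]
        constructor
        · rintro ⟨a, ha, rfl⟩
          exact Finset.mem_preimage.1 ha
        · intro hx
          have := hsub hx
          rw [Finset.mem_map] at this
          obtain ⟨a, -, rfl⟩ := this
          exact ⟨a, Finset.mem_preimage.2 hx, rfl⟩
      have hDchain : IsChain (· ≤ ·) (↑D : Set α) := by
        intro u hu v hv hne
        have hu' : (eA u : (α ⊕ β) ⊕ Fin c) ∈ CL := by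
          rw [← hD]; exact Finset.mem_map_of_mem _ (Finset.mem_coe.1 hu)
        have hv' : (eA v : (α ⊕ β) ⊕ Fin c) ∈ CL := by
          rw [← hD]; exact Finset.mem_map_of_mem _ (Finset.mem_coe.1 hv)
        have hne' : (eA u : (α ⊕ β) ⊕ Fin c) ≠ eA v := fun h => hne (eA.injective h)
        rcases hcomp _ (hCLC _ hu') _ (hCLC _ hv') hne' with h | h
        · exact Or.inl (h : u ≤ v)
        · exact Or.inr (h : v ≤ u)
      have := le_height hDchain
      have hcardD : D.card = CL.card := by rw [← hD, Finset.card_map]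
      omega
  omega

end Glue

end AOAux
namespace AOAux

set_option linter.unusedSectionVars false
open Finset

section Glue2

variable {α β : Type} [Fintype α] [PartialOrder α] [Fintype β] [PartialOrder β] {c : ℕ}

lemma glue_ao_le :
    @ao ((α ⊕ β) ⊕ Fin c) _ (gluePO) ≤
      max (@heightP ((α ⊕ β) ⊕ Fin c) _ (gluePO)) (ao α + ao β) := by
  classical
  refine @ao_le ((α ⊕ β) ⊕ Fin c) _ gluePO _ ?_
  intro U hU
  by_cases hR : ∃ x ∈ U, (Sum.isRight x = true)
  · -- U contains a chain element, hence U is a chain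
    obtain ⟨w, hw, hwr⟩ := hR
    rcases w with y | i
    · simp at hwr
    have hcomp : ∀ x : (α ⊕ β) ⊕ Fin c, gle x (.inr i) ∨ gle (.inr i) x := by
      intro x
      rcases x with (a | b) | j
      · exact Or.inl trivial
      · exact Or.inl trivial
      · exact (le_total j i).imp (fun h => (h : _)) (fun h => (h : _))
    have hchain : IsChain (fun x y : (α ⊕ β) ⊕ Fin c => gle x y) ↑U := by
      intro u hu v hv hne
      exact hU u (Finset.mem_coe.1 hu) (.inr i) hw v (Finset.mem_coe.1 hv)
        (hcomp u) ((hcomp v).symm)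
    have hh := @le_height ((α ⊕ β) ⊕ Fin c) _ gluePO U hchain
    exact le_trans hh (le_max_left _ _)
  · -- U is inside α ⊕ β
    push_neg at hR
    set UA := U.preimage (fun a : α => ((eA a) : (α ⊕ β) ⊕ Fin c))
      (fun x _ y _ h => eA.injective h) with hUAdef
    set UB := U.preimage (fun b : β => ((eB b) : (α ⊕ β) ⊕ Fin c))
      (fun x _ y _ h => eB.injective h) with hUBdef
    have hsub : U ⊆ UA.map eA ∪ UB.map eB := by
      intro x hx
      rcases x with (a | b) | i
      · exact Finset.mem_union_left _
          (Finset.mem_map_of_mem _ (Finset.mem_preimage.2 hx))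
      · exact Finset.mem_union_right _
          (Finset.mem_map_of_mem _ (Finset.mem_preimage.2 hx))
      · exact absurd rfl (hR _ hx)
    have hcard : U.card ≤ UA.card + UB.card := by
      calc U.card ≤ (UA.map eA ∪ UB.map eB).card := Finset.card_le_card hsub
        _ ≤ (UA.map eA).card + (UB.map eB).card := Finset.card_union_le _ _
        _ = UA.card + UB.card := by rw [Finset.card_map, Finset.card_map]
    have hA : IsChainUnion UA := by
      intro u hu v hv w hw h1 h2
      have hu' := Finset.mem_preimage.1 hu
      have hv' := Finset.mem_preimage.1 hv
      have hw' := Finset.mem_preimage.1 hw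
      refine hU _ hu' _ hv' _ hw' ?_ ?_
      · exact h1
      · exact h2
    have hB : IsChainUnion UB := by
      intro u hu v hv w hw h1 h2
      have hu' := Finset.mem_preimage.1 hu
      have hv' := Finset.mem_preimage.1 hv
      have hw' := Finset.mem_preimage.1 hw
      refine hU _ hu' _ hv' _ hw' ?_ ?_
      · exact h1
      · exact h2
    have h1 := le_ao hA
    have h2 := le_ao hB
    have : U.card ≤ ao α + ao β := by omega
    exact le_trans this (le_max_right _ _)

lemma glue_ao_ge :
    ao α + ao β ≤ @ao ((α ⊕ β) ⊕ Fin c) _ (gluePO) := by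
  classical
  obtain ⟨UA, hUA, hcA⟩ := ao_spec (α := α)
  obtain ⟨UB, hUB, hcB⟩ := ao_spec (α := β)
  have hdisj : Disjoint (UA.map (eA (β := β) (c := c))) (UB.map eB) := by
    rw [Finset.disjoint_left]
    intro x hx1 hx2
    rw [Finset.mem_map] at hx1 hx2
    obtain ⟨u, -, rfl⟩ := hx1
    obtain ⟨v, -, hv⟩ := hx2
    exact absurd hv (fun h => Sum.inr_ne_inl (Sum.inl.inj (h : (Sum.inl (Sum.inr v) : (α ⊕ β) ⊕ Fin c) = Sum.inl (Sum.inl u))))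
  have hcu : @IsChainUnion ((α ⊕ β) ⊕ Fin c) gluePO (UA.map eA ∪ UB.map eB) := by
    have key : ∀ u v : (α ⊕ β) ⊕ Fin c, u ∈ UA.map eA → v ∈ UB.map eB →
        (gle u v ∨ gle v u) → False := by
      intro u v hu hv huv
      rw [Finset.mem_map] at hu hv
      obtain ⟨a, -, rfl⟩ := hu
      obtain ⟨b, -, rfl⟩ := hv
      rcases huv with h | h
      · exact (h : False)
      · exact (h : False)
    intro x hx y hy z hz hxy hyz
    have hxy' : gle x y ∨ gle y x := hxy
    have hyz' : gle y z ∨ gle z y := hyz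
    rcases Finset.mem_union.1 hx with hx1 | hx2 <;>
      rcases Finset.mem_union.1 hy with hy1 | hy2 <;>
      rcases Finset.mem_union.1 hz with hz1 | hz2
    · -- all in A
      rw [Finset.mem_map] at hx1 hy1 hz1
      obtain ⟨u, hu, rfl⟩ := hx1
      obtain ⟨v, hv, rfl⟩ := hy1
      obtain ⟨w, hw, rfl⟩ := hz1
      exact hUA u hu v hv w hw (hxy' : u ≤ v ∨ v ≤ u) (hyz' : v ≤ w ∨ w ≤ v)
    · exact absurd hyz' (fun h => key y z hy1 hz2 h)
    · exact absurd hxy' (fun h => key x y hx1 hy2 h)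
    · exact absurd hxy' (fun h => key x y hx1 hy2 h)
    · exact absurd hxy' (fun h => key y x hy1 hx2 (h.symm))
    · exact absurd hxy' (fun h => key y x hy1 hx2 (h.symm))
    · exact absurd hyz' (fun h => key z y hz1 hy2 (h.symm))
    · -- all in B
      rw [Finset.mem_map] at hx2 hy2 hz2
      obtain ⟨u, hu, rfl⟩ := hx2
      obtain ⟨v, hv, rfl⟩ := hy2
      obtain ⟨w, hw, rfl⟩ := hz2
      exact hUB u hu v hv w hw (hxy' : u ≤ v ∨ v ≤ u) (hyz' : v ≤ w ∨ w ≤ v)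
  have := @le_ao ((α ⊕ β) ⊕ Fin c) _ gluePO _ hcu
  rw [Finset.card_union_of_disjoint hdisj, Finset.card_map, Finset.card_map,
    hcA, hcB] at this
  exact this

end Glue2

end AOAux
namespace AOAux

set_option linter.unusedSectionVars false
open Finset

lemma ao_inst_irrel {γ : Type} (i1 i2 : Fintype γ) (P : PartialOrder γ) :
    @ao γ i1 P = @ao γ i2 P := by
  cases Subsingleton.elim i1 i2; rfl

lemma height_inst_irrel {γ : Type} (i1 i2 : Fintype γ) (P : PartialOrder γ) :
    @heightP γ i1 P = @heightP γ i2 P := by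
  cases Subsingleton.elim i1 i2; rfl

lemma exists_fin_poset (γ : Type) [ft : Fintype γ] [P : PartialOrder γ] (n : ℕ)
    (hn : Fintype.card γ = n) :
    ∃ Q : PartialOrder (Fin n),
      (VFree γ → @VFree (Fin n) Q) ∧
      @ao (Fin n) (Fin.fintype n) Q = ao γ ∧
      @heightP (Fin n) (Fin.fintype n) Q = heightP γ := by
  set e : Fin n ≃ γ := ((Fintype.equivFin γ).trans (finCongr hn)).symm with he
  set Q : PartialOrder (Fin n) := PartialOrder.lift (fun i => e i) e.injective with hQ
  have hiff : ∀ x y : Fin n,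
      e x ≤ e y ↔ @LE.le (Fin n) (@Preorder.toLE (Fin n) (@PartialOrder.toPreorder (Fin n) Q)) x y :=
    fun x y => Iff.rfl
  have hiff' : ∀ x y : γ,
      @LE.le (Fin n) (@Preorder.toLE (Fin n) (@PartialOrder.toPreorder (Fin n) Q))
        (e.symm x) (e.symm y) ↔ x ≤ y := by
    intro x y
    constructor
    · intro h
      have h2 : e (e.symm x) ≤ e (e.symm y) := h
      rwa [Equiv.apply_symm_apply, Equiv.apply_symm_apply] at h2
    · intro h
      have h2 : e (e.symm x) ≤ e (e.symm y) := by
        rwa [Equiv.apply_symm_apply, Equiv.apply_symm_apply]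
      exact h2
  refine ⟨Q, ?_, ?_, ?_⟩
  · intro hV
    exact @vfree_of_embed (Fin n) γ (Fin.fintype n) Q _ _ (fun i => e i) hiff hV
  · have h1 := @ao_le_of_embed (Fin n) γ (Fin.fintype n) Q _ _ (fun i => e i)
      e.injective hiff
    have h2 := @ao_le_of_embed γ (Fin n) _ _ (Fin.fintype n) Q (fun x => e.symm x)
      e.symm.injective hiff'
    exact le_antisymm h1 h2
  · have h1 := @height_le_of_embed (Fin n) γ (Fin.fintype n) Q _ _ (fun i => e i)
      e.injective (fun x y h => (hiff x y).2 h)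
    have h2 := @height_le_of_embed γ (Fin n) _ _ (Fin.fintype n) Q (fun x => e.symm x)
      e.symm.injective (fun x y h => (hiff' x y).2 h)
    exact le_antisymm h1 h2

lemma construct : ∀ a : ℕ, 1 ≤ a →
    ∃ (γ : Type) (ft : Fintype γ) (P : PartialOrder γ),
      @VFree γ P ∧ @ao γ ft P = a ∧ @heightP γ ft P ≤ a ∧ @Fintype.card γ ft = Ff a := by
  intro a
  induction a using Nat.strong_induction_on with
  | _ a ih =>
    intro ha
    rcases eq_or_lt_of_le ha with h1 | h2
    · -- a = 1
      subst h1
      refine ⟨PUnit, inferInstance, inferInstance, ?_, ?_, ?_, ?_⟩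
      · rintro ⟨p1, p2, p3, h12, -, -⟩
        have h := h12
        rw [Subsingleton.elim p1 p2] at h
        exact lt_irrefl _ h
      · refine le_antisymm (le_trans ao_le_card (by simp)) one_le_ao
      · exact le_trans height_le_card (by simp)
      · simp [Ff, Cf_one]
    · -- 2 ≤ a
      have ha2 : 2 ≤ a := h2
      set t := Nat.clog 2 a - 1 with ht
      set p := 2 ^ t with hp
      set q := a - p with hq
      have hclog : 1 ≤ Nat.clog 2 a := Nat.clog_pos one_lt_two ha2
      have hplt : p < a := by
        rw [hp, ht]
        exact Nat.pow_pred_clog_lt_self one_lt_two ha2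
      have hle : a ≤ 2 ^ Nat.clog 2 a := Nat.le_pow_clog one_lt_two a
      have hc' : Nat.clog 2 a = t + 1 := by omega
      rw [hc', pow_succ] at hle
      have hp1 : 1 ≤ p := Nat.one_le_two_pow
      have hq1 : 1 ≤ q := by omega
      have hqp : q ≤ p := by omega
      have hpa : p + q = a := by omega
      obtain ⟨γ₁, ft₁, P₁, hV₁, hao₁, hh₁, hc₁⟩ := ih p (by omega) (by omega)
      obtain ⟨γ₂, ft₂, P₂, hV₂, hao₂, hh₂, hc₂⟩ := ih q (by omega) (by omega)
      letI := ft₁; letI := P₁; letI := ft₂; letI := P₂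
      have hht := glue_height_le (α := γ₁) (β := γ₂) (c := q)
      have hmax : max (heightP γ₁) (heightP γ₂) ≤ p :=
        max_le hh₁ (le_trans hh₂ hqp)
      refine ⟨(γ₁ ⊕ γ₂) ⊕ Fin q, inferInstance, gluePO, ?_, ?_, ?_, ?_⟩
      · exact glue_vfree hV₁ hV₂
      · apply le_antisymm
        · have h3 := glue_ao_le (α := γ₁) (β := γ₂) (c := q)
          rw [hao₁, hao₂] at h3
          omega
        · have h3 := glue_ao_ge (α := γ₁) (β := γ₂) (c := q)
          rw [hao₁, hao₂] at h3
          omega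
      · omega
      · have hcs : Fintype.card ((γ₁ ⊕ γ₂) ⊕ Fin q) = Ff p + Ff q + q := by
          simp [hc₁, hc₂]
        have hCf : Cf (p + q) = Cf p + Cf q + q := by
          rw [hp]
          exact Cf_pow_add t q (by rw [← hp]; exact hqp)
        rw [hpa] at hCf
        simp only [Ff] at *
        omega

lemma lambda_eq (a : ℕ) (ha : 1 ≤ a) : Lambda a = Ff a := by
  classical
  obtain ⟨γ, ft, P, hV, hao, hh, hcard⟩ := construct a ha
  letI := ft; letI := P
  obtain ⟨Q, hVq, haoq, hhq⟩ := exists_fin_poset γ (Ff a) hcard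
  have hmem : Ff a ∈ {n | ∃ P : PartialOrder (Fin n), @VFree (Fin n) P ∧
      @ao (Fin n) (Fin.fintype n) P = a ∧ @heightP (Fin n) (Fin.fintype n) P ≤ a} :=
    ⟨Q, hVq hV, by rw [haoq, hao], by rw [hhq]; exact hh⟩
  have hub : ∀ n ∈ {n | ∃ P : PartialOrder (Fin n), @VFree (Fin n) P ∧
      @ao (Fin n) (Fin.fintype n) P = a ∧ @heightP (Fin n) (Fin.fintype n) P ≤ a},
      n ≤ Ff a := by
    rintro n ⟨P', hV', hao', hh'⟩
    have hcard' := @card_le_Ff (Fin n) (Fin.fintype n) P' hV'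
    have hcn : @Fintype.card (Fin n) (Fin.fintype n) = n := by
      rw [congrArg (fun i => @Fintype.card (Fin n) i) (Subsingleton.elim (Fin.fintype n) _)]
      exact Fintype.card_fin n
    rw [hcn, hao'] at hcard'
    exact hcard'
  unfold Lambda Lam
  apply le_antisymm
  · exact csSup_le ⟨Ff a, hmem⟩ hub
  · exact le_csSup ⟨Ff a, fun n hn => hub n hn⟩ hmem

end AOAux


/-- for `a ≥ 2` and `α = ⌈log₂ a⌉ − 1`,
`Λ(a) = Λ(2^α) + Λ(a − 2^α) + (a − 2^α)`. -/
theorem Lambda_two_power_split (a : ℕ) (ha : 2 ≤ a) :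
    Lambda a = Lambda (2 ^ (Nat.clog 2 a - 1)) + Lambda (a - 2 ^ (Nat.clog 2 a - 1))
      + (a - 2 ^ (Nat.clog 2 a - 1)) := by
  open AOAux in
  set t := Nat.clog 2 a - 1 with ht
  set p := 2 ^ t with hp
  set q := a - p with hq
  have hclog : 1 ≤ Nat.clog 2 a := Nat.clog_pos one_lt_two ha
  have hplt : p < a := by
    rw [hp, ht]
    exact Nat.pow_pred_clog_lt_self one_lt_two ha
  have hle : a ≤ 2 ^ Nat.clog 2 a := Nat.le_pow_clog one_lt_two a
  have hc' : Nat.clog 2 a = t + 1 := by omega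
  rw [hc', pow_succ] at hle
  have hp1 : 1 ≤ p := Nat.one_le_two_pow
  have hq1 : 1 ≤ q := by omega
  have hqp : q ≤ p := by omega
  have hpa : p + q = a := by omega
  rw [AOAux.lambda_eq a (by omega), AOAux.lambda_eq p (by omega),
    AOAux.lambda_eq q (by omega)]
  have hCf : AOAux.Cf (p + q) = AOAux.Cf p + AOAux.Cf q + q := by
    rw [hp]
    exact AOAux.Cf_pow_add t q (by rw [← hp]; exact hqp)
  rw [hpa] at hCf
  simp only [AOAux.Ff]
  omega
end
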